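/- arXiv:1309.3713 — 10 statements merged into one kernel-verified Lean document; each statement's English description precedes it below -/
import Mathlib

section
/- Assume the axioms BA, AxColl₃, Ax∀inecoll⁻, AxMass and AxThEx⁻ (i.e. DYN without AxSpd⁻). Suppose k, h are inertial observers and b is an inertial particle satisfying v_k(b) < ∞, v_h(b) < ∞, v_k(h) < ∞ and v_h(k) < ∞. Then m_k(b) = 0 if and only if m_h(b) = 0. -/
open scoped Classical

noncomputable section

/-! Framework for axiomatic relativistic/Newtonian dynamics
(Madarász–Stannett–Székely).  `Q⁴` is modelled as `Fin 4 → Q` with the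
time component at index `0` and space components at indices `1,2,3`;
`Q³` is `Fin 3 → Q`. -/

/-- `AxEField`: every nonnegative element of `Q` has a square root
(`Q` being a linearly ordered field). -/
def AxEField (Q : Type*) [Field Q] [LinearOrder Q] [IsStrictOrderedRing Q] : Prop :=
  ∀ x : Q, 0 ≤ x → ∃ y : Q, y ^ 2 = x

/-- The nonnegative square root of `x`, when it exists (junk value `0` otherwise).
In a Euclidean field this is the usual square root function `√`. -/
def esqrt {Q : Type*} [Field Q] [LinearOrder Q] [IsStrictOrderedRing Q] (x : Q) : Q :=
  if h : ∃ y : Q, 0 ≤ y ∧ y ^ 2 = x then h.choose else 0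

/-- Squared Euclidean norm on `Q³`. -/
def normSq3 {Q : Type*} [Field Q] [LinearOrder Q] [IsStrictOrderedRing Q] (u : Fin 3 → Q) : Q :=
  u 0 ^ 2 + u 1 ^ 2 + u 2 ^ 2

/-- Euclidean norm (length) on `Q³`. -/
def enorm3 {Q : Type*} [Field Q] [LinearOrder Q] [IsStrictOrderedRing Q] (u : Fin 3 → Q) : Q :=
  esqrt (normSq3 u)

/-- The Minkowski norm `‖x‖_M = √|x₁² − x₂² − x₃² − x₄²|` on `Q⁴`. -/
def minkNorm {Q : Type*} [Field Q] [LinearOrder Q] [IsStrictOrderedRing Q] (x : Fin 4 → Q) : Q :=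
  esqrt |x 0 ^ 2 - x 1 ^ 2 - x 2 ^ 2 - x 3 ^ 2|

/-- The straight line of `Q⁴` through two (distinct) points. -/
def lineThrough {Q : Type*} [Field Q] [LinearOrder Q] [IsStrictOrderedRing Q] (x y : Fin 4 → Q) :
    Set (Fin 4 → Q) :=
  {z | ∃ q : Q, z = x + q • (y - x)}

/-- `f : Q⁴ → Q⁴` is an affine transformation. -/
def IsAffine {Q : Type*} [Field Q] [LinearOrder Q] [IsStrictOrderedRing Q]
    (f : (Fin 4 → Q) → (Fin 4 → Q)) : Prop :=
  ∃ L : (Fin 4 → Q) →ₗ[Q] (Fin 4 → Q), ∀ x, f x = L x + f 0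

/-- `u ⪯ w` : `u` and `w` point in the same direction and `u` is no longer
than `w`. -/
def vecLe {Q : Type*} [Field Q] [LinearOrder Q] [IsStrictOrderedRing Q] (u w : Fin 3 → Q) : Prop :=
  ∃ l : Q, 0 ≤ l ∧ l ≤ 1 ∧ u = l • w

/-- A kinematic/dynamic frame: bodies `B` with distinguished inertial
observers, inertial particles and photons; world-lines, world-view
transformations and relativistic masses. -/
structure Frame (Q : Type*) (B : Type*) where
  /-- inertial observers -/
  IOb : Set B
  /-- inertial particles -/
  Ip : Set B
  /-- photons -/
  Ph : Set B
  /-- `wl k b` : the world-line of body `b` according to observer `k` -/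
  wl : B → B → Set (Fin 4 → Q)
  /-- `w k h` : the world-view transformation from `k`'s world-view to `h`'s -/
  w : B → B → (Fin 4 → Q) → (Fin 4 → Q)
  /-- `m k b` : the relativistic mass of `b` according to `k` -/
  m : B → B → Q

namespace Frame

variable {Q : Type*} [Field Q] [LinearOrder Q] [IsStrictOrderedRing Q] {B : Type*} (F : Frame Q B)

/-- `v_k(b) < ∞` : the world-line of `b` according to `k` contains no two
distinct points with equal time components. -/
def finite (k b : B) : Prop :=
  ∀ x ∈ F.wl k b, ∀ y ∈ F.wl k b, x ≠ y → x 0 ≠ y 0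

/-- The velocity `v⃗_k(b) ∈ Q³` computed from any two points of the world-line
with distinct time components (junk value `0` if there are none). -/
def vvec (k b : B) : Fin 3 → Q :=
  if h : ∃ x, x ∈ F.wl k b ∧ ∃ y, y ∈ F.wl k b ∧ x 0 ≠ y 0 then
    fun i => (h.choose i.succ - h.choose_spec.2.choose i.succ) /
      (h.choose 0 - h.choose_spec.2.choose 0)
  else 0

/-- The speed `v_k(b) ∈ Q`. -/
def speed (k b : B) : Q := enorm3 (F.vvec k b)

/-- The linear momentum `p⃗_k(b) = m_k(b) · v⃗_k(b) ∈ Q³`. -/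
def mom (k b : B) : Fin 3 → Q := F.m k b • F.vvec k b

/-- The four-momentum `P_k(b) = (m_k(b), p⃗_k(b)) ∈ Q⁴`. -/
def fourMom (k b : B) : Fin 4 → Q := Fin.cons (F.m k b) (F.mom k b)

/-- `b` is incoming at `x` according to `k`. -/
def incomingAt (k b : B) (x : Fin 4 → Q) : Prop :=
  x ∈ F.wl k b ∧ F.finite k b ∧ ∀ y ∈ F.wl k b, y ≠ x → y 0 < x 0

/-- `b` is outgoing at `x` according to `k`. -/
def outgoingAt (k b : B) (x : Fin 4 → Q) : Prop :=
  x ∈ F.wl k b ∧ F.finite k b ∧ ∀ y ∈ F.wl k b, y ≠ x → x 0 < y 0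

/-- `in_k(b)` : `b` is incoming at some point according to `k`. -/
def incoming (k b : B) : Prop := ∃ x, F.incomingAt k b x

/-- `out_k(b)` : `b` is outgoing at some point according to `k`. -/
def outgoing (k b : B) : Prop := ∃ x, F.outgoingAt k b x

/-- `coll_k(abc)` : the particles `a`, `b`, `c` form a collision according
to `k` : at some point `x` each of them is incoming or outgoing, and the sum
of the four-momenta of the incoming particles equals that of the outgoing
ones. -/
def coll3 (k a b c : B) : Prop :=
  ∃ x : Fin 4 → Q,
    (F.incomingAt k a x ∨ F.outgoingAt k a x) ∧
    (F.incomingAt k b x ∨ F.outgoingAt k b x) ∧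
    (F.incomingAt k c x ∨ F.outgoingAt k c x) ∧
    ((if F.incomingAt k a x then F.fourMom k a else 0) +
     (if F.incomingAt k b x then F.fourMom k b else 0) +
     (if F.incomingAt k c x then F.fourMom k c else 0) =
     (if F.outgoingAt k a x then F.fourMom k a else 0) +
     (if F.outgoingAt k b x then F.fourMom k b else 0) +
     (if F.outgoingAt k c x then F.fourMom k c else 0))

/-- `a` and `b` collide inelastically according to `k`. -/
def inelastic (k a b : B) : Prop :=
  ∃ c, c ∈ F.Ip ∧ F.coll3 k a b c ∧
    F.incoming k a ∧ F.incoming k b ∧ F.outgoing k c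

/-- `A_k(b)` : the four-momentum of `b` signed according to whether `b` is
incoming (`+P_k(b)`) or outgoing (`−P_k(b)`) for `k`. -/
def signedMom (k b : B) : Fin 4 → Q :=
  if F.incoming k b then F.fourMom k b else -(F.fourMom k b)

/-- `AxL` : world-lines of inertial particles and inertial observers are
subsets of straight lines and contain at least two points. -/
def AxL : Prop :=
  ∀ k ∈ F.IOb, ∀ b ∈ F.Ip ∪ F.IOb,
    (∃ x y : Fin 4 → Q, x ≠ y ∧ F.wl k b ⊆ lineThrough x y) ∧
    (∃ x ∈ F.wl k b, ∃ y ∈ F.wl k b, x ≠ y)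

/-- `AxW` : world-view transformations are bijective affine transformations
mapping world-lines to world-lines. -/
def AxW : Prop :=
  ∀ k ∈ F.IOb, ∀ h ∈ F.IOb,
    Function.Bijective (F.w k h) ∧ IsAffine (F.w k h) ∧
    ∀ b : B, F.w k h '' F.wl k b = F.wl h b

/-- `AxSelf⁻` : inertial observers are stationary in their own coordinate
systems. -/
def AxSelf : Prop :=
  ∀ k ∈ F.IOb, ∀ x ∈ F.wl k k, x 1 = 0 ∧ x 2 = 0 ∧ x 3 = 0

/-- The basic axiom system `BA`. -/
def BA : Prop := AxEField Q ∧ F.AxL ∧ F.AxW ∧ F.AxSelf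

/-- `AxColl₃`. -/
def AxColl3 : Prop :=
  ∀ k ∈ F.IOb, ∀ h ∈ F.IOb, ∀ a ∈ F.Ip, ∀ b ∈ F.Ip, ∀ c ∈ F.Ip,
    F.coll3 k a b c → F.finite h a → F.finite h b → F.finite h c →
      F.coll3 h a b c

/-- `Ax∀inecoll⁻`. -/
def AxInecoll : Prop :=
  ∀ k ∈ F.IOb, ∀ a ∈ F.Ip, ∀ b ∈ F.Ip,
    F.finite k a → F.finite k b → F.m k a + F.m k b ≠ 0 →
      ∃ a' ∈ F.Ip, ∃ b' ∈ F.Ip,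
        F.fourMom k a' = F.fourMom k a ∧ F.fourMom k b' = F.fourMom k b ∧
        F.inelastic k a' b'

/-- `AxSpd⁻`. -/
def AxSpd : Prop :=
  ∀ k ∈ F.IOb, ∀ h ∈ F.IOb, ∀ b ∈ F.Ip,
    vecLe (F.vvec k b) (F.vvec k h) → F.speed k b = F.speed h b →
      F.m k b = F.m h b

/-- `AxMass`. -/
def AxMass : Prop :=
  ∀ k ∈ F.IOb, ∀ h ∈ F.IOb, ∀ a ∈ F.Ip, ∀ b ∈ F.Ip,
    F.fourMom k a = F.fourMom k b → F.m h a = F.m h b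

/-- `AxThEx⁻`. -/
def AxThEx : Prop :=
  ∀ k ∈ F.IOb, ∀ h ∈ F.IOb, ∀ u : Fin 3 → Q,
    vecLe u (F.vvec k h) →
      ∃ b ∈ F.Ip, F.vvec k b = u ∧ F.m k b ≠ 0

/-- The axiom system `DYN` for dynamics. -/
def DYN : Prop :=
  F.BA ∧ F.AxColl3 ∧ F.AxInecoll ∧ F.AxSpd ∧ F.AxMass ∧ F.AxThEx

/-- `AxPh` : the light axiom. -/
def AxPh : Prop :=
  ∀ k ∈ F.IOb, ∀ x y : Fin 4 → Q,
    (∃ p ∈ F.Ph, x ∈ F.wl k p ∧ y ∈ F.wl k p) ↔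
      (x 1 - y 1) ^ 2 + (x 2 - y 2) ^ 2 + (x 3 - y 3) ^ 2 = (x 0 - y 0) ^ 2

/-- `AxAbsSim` : absolute simultaneity. -/
def AxAbsSim : Prop :=
  ∀ k ∈ F.IOb, ∀ h ∈ F.IOb, ∀ x y : Fin 4 → Q,
    (F.w k h x) 0 = (F.w k h y) 0 ↔ x 0 = y 0

end Frame


namespace Frame

variable {Q : Type*} [Field Q] [LinearOrder Q] [IsStrictOrderedRing Q] {B : Type*} (F : Frame Q B)

lemma fourMom_zero {k b : B} (h : F.m k b = 0) : F.fourMom k b = 0 := by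
  funext i
  refine Fin.cases ?_ (fun j => ?_) i <;>
    simp [Frame.fourMom, Frame.mom, h]

lemma not_in_out {k b : B} {x : Fin 4 → Q}
    (h2 : ∃ r ∈ F.wl k b, ∃ s ∈ F.wl k b, r ≠ s)
    (hin : F.incomingAt k b x) (hout : F.outgoingAt k b x) : False := by
  obtain ⟨r, hr, s, hs, hrs⟩ := h2
  rcases eq_or_ne r x with hrx | hrx
  · have hsx : s ≠ x := fun e => hrs (hrx.trans e.symm)
    exact absurd (hin.2.2 s hs hsx) (not_lt.mpr (hout.2.2 s hs hsx).le)
  · exact absurd (hin.2.2 r hr hrx) (not_lt.mpr (hout.2.2 r hr hrx).le)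

lemma diff_eq_smul {k b : B} {u0 u1 : Fin 4 → Q}
    (hline : F.wl k b ⊆ lineThrough u0 u1) (hfin : F.finite k b)
    {p q : Fin 4 → Q} (hp : p ∈ F.wl k b) (hq : q ∈ F.wl k b) :
    p - q = (p 0 - q 0) • (Fin.cons 1 (F.vvec k b) : Fin 4 → Q) := by
  rcases eq_or_ne p q with rfl | hpq
  · simp
  have hpq0 : p 0 ≠ q 0 := hfin p hp q hq hpq
  have hex : ∃ x, x ∈ F.wl k b ∧ ∃ y, y ∈ F.wl k b ∧ x 0 ≠ y 0 :=
    ⟨p, hp, q, hq, hpq0⟩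
  obtain ⟨X, Y, hX, hY, hXY0, hvv⟩ :
      ∃ X Y : Fin 4 → Q, X ∈ F.wl k b ∧ Y ∈ F.wl k b ∧ X 0 ≠ Y 0 ∧
        ∀ i : Fin 3, F.vvec k b i = (X i.succ - Y i.succ) / (X 0 - Y 0) := by
    refine ⟨hex.choose, hex.choose_spec.2.choose, hex.choose_spec.1,
      hex.choose_spec.2.choose_spec.1, hex.choose_spec.2.choose_spec.2,
      fun i => ?_⟩
    unfold Frame.vvec
    rw [dif_pos hex]
  obtain ⟨tp, hpe⟩ := hline hp
  obtain ⟨tq, hqe⟩ := hline hq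
  obtain ⟨tX, hXe⟩ := hline hX
  obtain ⟨tY, hYe⟩ := hline hY
  have hpqd : ∀ i, p i - q i = (tp - tq) * (u1 i - u0 i) := by
    intro i
    rw [hpe, hqe]
    simp only [Pi.add_apply, Pi.smul_apply, Pi.sub_apply, smul_eq_mul]
    ring
  have hXYd : ∀ i, X i - Y i = (tX - tY) * (u1 i - u0 i) := by
    intro i
    rw [hXe, hYe]
    simp only [Pi.add_apply, Pi.smul_apply, Pi.sub_apply, smul_eq_mul]
    ring
  have hprod : (tX - tY) * (u1 0 - u0 0) ≠ 0 := by
    rw [← hXYd 0]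
    exact sub_ne_zero.mpr hXY0
  have htXY : tX - tY ≠ 0 := fun e => hprod (by rw [e, zero_mul])
  have hd0 : u1 0 - u0 0 ≠ 0 := fun e => hprod (by rw [e, mul_zero])
  funext i
  refine Fin.cases ?_ (fun j => ?_) i
  · simp only [Pi.sub_apply, Pi.smul_apply, smul_eq_mul, Fin.cons_zero, mul_one]
  · simp only [Pi.sub_apply, Pi.smul_apply, smul_eq_mul, Fin.cons_succ]
    rw [hvv j]
    have e1 : p j.succ - q j.succ = (tp - tq) * (u1 j.succ - u0 j.succ) :=
      hpqd j.succ
    have e2 : p 0 - q 0 = (tp - tq) * (u1 0 - u0 0) := hpqd 0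
    have e3 : X j.succ - Y j.succ = (tX - tY) * (u1 j.succ - u0 j.succ) :=
      hXYd j.succ
    have e4 : X 0 - Y 0 = (tX - tY) * (u1 0 - u0 0) := hXYd 0
    rw [e1, e2, e3, e4]
    field_simp

lemma finite_transfer {k h a b : B} {u0 u1 w0 w1 : Fin 4 → Q}
    (hlinea : F.wl h a ⊆ lineThrough u0 u1)
    (hlineb : F.wl h b ⊆ lineThrough w0 w1)
    (hptsb : ∃ r ∈ F.wl h b, ∃ s ∈ F.wl h b, r ≠ s)
    (hfa : F.finite h a) (hfb : F.finite h b) (hfkb : F.finite k b)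
    (hinj : Function.Injective (F.w h k)) (hAff : IsAffine (F.w h k))
    (hWa : F.w h k '' F.wl h a = F.wl k a)
    (hWb : F.w h k '' F.wl h b = F.wl k b)
    (hv : F.vvec h a = F.vvec h b) :
    F.finite k a := by
  obtain ⟨Lm, hLm⟩ := hAff
  have hkey : ∀ u v, F.w h k u - F.w h k v = Lm (u - v) := by
    intro u v
    rw [hLm u, hLm v, map_sub]
    abel
  intro X hX Y hY hXY
  rw [← hWa] at hX hY
  obtain ⟨p, hp, rfl⟩ := hX
  obtain ⟨q, hq, rfl⟩ := hY
  have hpq : p ≠ q := fun e => hXY (by rw [e])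
  have hpq0 : p 0 ≠ q 0 := hfa p hp q hq hpq
  obtain ⟨r, hr, s, hs, hrs⟩ := hptsb
  have hrs0 : r 0 ≠ s 0 := hfb r hr s hs hrs
  have h1 := F.diff_eq_smul hlinea hfa hp hq
  have h2 := F.diff_eq_smul hlineb hfb hr hs
  rw [hv] at h1
  have h3 : p - q = ((p 0 - q 0) / (r 0 - s 0)) • (r - s) := by
    rw [h1, h2, smul_smul]
    congr 1
    rw [div_mul_eq_mul_div, mul_div_assoc, div_self (sub_ne_zero.mpr hrs0),
      mul_one]
  have h4 : F.w h k p - F.w h k q =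
      ((p 0 - q 0) / (r 0 - s 0)) • (F.w h k r - F.w h k s) := by
    rw [hkey, hkey, h3, map_smul]
  have hrs' : F.w h k r 0 ≠ F.w h k s 0 := by
    refine hfkb _ ?_ _ ?_ (fun e => hrs (hinj e))
    · rw [← hWb]; exact ⟨r, hr, rfl⟩
    · rw [← hWb]; exact ⟨s, hs, rfl⟩
  have h5 := congrFun h4 0
  simp only [Pi.sub_apply, Pi.smul_apply, smul_eq_mul] at h5
  have hne : (p 0 - q 0) / (r 0 - s 0) * (F.w h k r 0 - F.w h k s 0) ≠ 0 :=
    mul_ne_zero (div_ne_zero (sub_ne_zero.mpr hpq0) (sub_ne_zero.mpr hrs0))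
      (sub_ne_zero.mpr hrs')
  rw [← h5] at hne
  exact sub_ne_zero.mp hne

lemma status_transfer {k h a : B} {u0 u1 : Fin 4 → Q} {x : Fin 4 → Q}
    (hlinea : F.wl h a ⊆ lineThrough u0 u1)
    (hfa : F.finite h a) (hfka : F.finite k a)
    (hAff : IsAffine (F.w h k))
    (hWa : F.w h k '' F.wl h a = F.wl k a)
    (hst : F.incomingAt h a x ∨ F.outgoingAt h a x) :
    F.incomingAt k a (F.w h k x) ∨ F.outgoingAt k a (F.w h k x) := by
  obtain ⟨Lm, hLm⟩ := hAff
  have hkey : ∀ u v, F.w h k u - F.w h k v = Lm (u - v) := by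
    intro u v
    rw [hLm u, hLm v, map_sub]
    abel
  have hx : x ∈ F.wl h a := hst.elim (·.1) (·.1)
  have hy : F.w h k x ∈ F.wl k a := by
    rw [← hWa]; exact ⟨x, hx, rfl⟩
  by_contra hno
  push_neg at hno
  obtain ⟨hnin, hnout⟩ := hno
  have hz1 : ∃ z ∈ F.wl k a, z ≠ F.w h k x ∧ ¬ (z 0 < F.w h k x 0) := by
    by_contra hc
    push_neg at hc
    exact hnin ⟨hy, hfka, fun z hz hne => hc z hz hne⟩
  have hz2 : ∃ z ∈ F.wl k a, z ≠ F.w h k x ∧ ¬ (F.w h k x 0 < z 0) := by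
    by_contra hc
    push_neg at hc
    exact hnout ⟨hy, hfka, fun z hz hne => hc z hz hne⟩
  obtain ⟨z1, hz1m, hz1ne, hz1le⟩ := hz1
  obtain ⟨z2, hz2m, hz2ne, hz2le⟩ := hz2
  have hz1t : F.w h k x 0 < z1 0 :=
    lt_of_le_of_ne (not_lt.mp hz1le) (Ne.symm (hfka z1 hz1m _ hy hz1ne))
  have hz2t : z2 0 < F.w h k x 0 :=
    lt_of_le_of_ne (not_lt.mp hz2le) (hfka z2 hz2m _ hy hz2ne)
  rw [← hWa] at hz1m hz2m
  obtain ⟨p1, hp1, hp1e⟩ := hz1m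
  obtain ⟨p2, hp2, hp2e⟩ := hz2m
  have hp1x : p1 ≠ x := fun e => hz1ne (by rw [← hp1e, e])
  have hp2x : p2 ≠ x := fun e => hz2ne (by rw [← hp2e, e])
  have hd1 := F.diff_eq_smul hlinea hfa hp1 hx
  have hd2 := F.diff_eq_smul hlinea hfa hp2 hx
  have he1 : z1 - F.w h k x = (p1 0 - x 0) • Lm (Fin.cons 1 (F.vvec h a) : Fin 4 → Q) := by
    rw [← hp1e, hkey, hd1, map_smul]
  have he2 : z2 - F.w h k x = (p2 0 - x 0) • Lm (Fin.cons 1 (F.vvec h a) : Fin 4 → Q) := by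
    rw [← hp2e, hkey, hd2, map_smul]
  have ht1 := congrFun he1 0
  have ht2 := congrFun he2 0
  simp only [Pi.sub_apply, Pi.smul_apply, smul_eq_mul] at ht1 ht2
  set c := Lm (Fin.cons 1 (F.vvec h a) : Fin 4 → Q) 0 with hc
  rcases hst with hin | hout
  · have ha1 : p1 0 < x 0 := hin.2.2 p1 hp1 hp1x
    have ha2 : p2 0 < x 0 := hin.2.2 p2 hp2 hp2x
    have hc1 : c < 0 := by
      by_contra hcge
      push_neg at hcge
      have : (p1 0 - x 0) * c ≤ 0 :=
        mul_nonpos_iff.mpr (Or.inr ⟨by linarith, hcge⟩)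
      linarith
    have : 0 < (p2 0 - x 0) * c := mul_pos_of_neg_of_neg (by linarith) hc1
    linarith
  · have ha1 : x 0 < p1 0 := hout.2.2 p1 hp1 hp1x
    have ha2 : x 0 < p2 0 := hout.2.2 p2 hp2 hp2x
    have hc1 : c < 0 := by
      by_contra hcge
      push_neg at hcge
      have : 0 ≤ (p2 0 - x 0) * c := mul_nonneg (by linarith) hcge
      linarith
    have : (p1 0 - x 0) * c < 0 := mul_neg_of_pos_of_neg (by linarith) hc1
    linarith

theorem aux_mass_zero
    {Q : Type*} [Field Q] [LinearOrder Q] [IsStrictOrderedRing Q] {B : Type*} (F : Frame Q B)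
    (hBA : F.BA) (hColl : F.AxColl3) (hIne : F.AxInecoll) (hMass : F.AxMass)
    (k h : B) (hk : k ∈ F.IOb) (hh : h ∈ F.IOb) (b : B) (hb : b ∈ F.Ip)
    (hfkb : F.finite k b) (hfhb : F.finite h b)
    (h0 : F.m k b = 0) : F.m h b = 0 := by
  by_contra hmu
  obtain ⟨hEF, hL, hW, hSelf⟩ := hBA
  obtain ⟨⟨w0, w1, -, hlineb⟩, hptsb⟩ := hL h hh b (Or.inl hb)
  obtain ⟨hbij, hAff, himg⟩ := hW h hh k hk
  have hsum : F.m h b + F.m h b ≠ 0 := fun e => hmu (by linarith)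
  obtain ⟨b1, hb1, b2, hb2, hM1, hM2, hinel⟩ :=
    hIne h hh b hb b hb hfhb hfhb hsum
  obtain ⟨c, hcIp, hcoll, -, -, -⟩ := hinel
  obtain ⟨x, hs1, hs2, -, -⟩ := hcoll
  -- masses
  have hmhb1 : F.m h b1 = F.m h b := by
    have := congrFun hM1 0
    simpa [Frame.fourMom] using this
  have hmhb2 : F.m h b2 = F.m h b := by
    have := congrFun hM2 0
    simpa [Frame.fourMom] using this
  have hmkb1 : F.m k b1 = 0 := (hMass h hh k hk b1 hb1 b hb hM1).trans h0
  have hmkb2 : F.m k b2 = 0 := (hMass h hh k hk b2 hb2 b hb hM2).trans h0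
  -- velocities
  have hv1 : F.vvec h b1 = F.vvec h b := by
    funext i
    have h1 := congrFun hM1 i.succ
    simp only [Frame.fourMom, Fin.cons_succ, Frame.mom, Pi.smul_apply,
      smul_eq_mul] at h1
    rw [hmhb1] at h1
    exact mul_left_cancel₀ hmu h1
  have hv2 : F.vvec h b2 = F.vvec h b := by
    funext i
    have h1 := congrFun hM2 i.succ
    simp only [Frame.fourMom, Fin.cons_succ, Frame.mom, Pi.smul_apply,
      smul_eq_mul] at h1
    rw [hmhb2] at h1
    exact mul_left_cancel₀ hmu h1
  -- statuses in h
  have hfh1 : F.finite h b1 := hs1.elim (·.2.1) (·.2.1)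
  have hfh2 : F.finite h b2 := hs2.elim (·.2.1) (·.2.1)
  obtain ⟨⟨u0, u1, -, hline1⟩, hpts1⟩ := hL h hh b1 (Or.inl hb1)
  obtain ⟨⟨t0, t1, -, hline2⟩, hpts2⟩ := hL h hh b2 (Or.inl hb2)
  -- finiteness in k
  have hfk1 : F.finite k b1 :=
    F.finite_transfer hline1 hlineb hptsb hfh1 hfhb hfkb hbij.injective hAff
      (himg b1) (himg b) hv1
  have hfk2 : F.finite k b2 :=
    F.finite_transfer hline2 hlineb hptsb hfh2 hfhb hfkb hbij.injective hAff
      (himg b2) (himg b) hv2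
  -- statuses in k
  have hsk1 := F.status_transfer hline1 hfh1 hfk1 hAff (himg b1) hs1
  have hsk2 := F.status_transfer hline2 hfh2 hfk2 hAff (himg b2) hs2
  -- trivial collision in k
  have hcollk : F.coll3 k b1 b1 b2 := by
    refine ⟨F.w h k x, hsk1, hsk1, hsk2, ?_⟩
    simp [F.fourMom_zero hmkb1, F.fourMom_zero hmkb2]
  have hcollh : F.coll3 h b1 b1 b2 :=
    hColl k hk h hh b1 hb1 b1 hb1 b2 hb2 hcollk hfh1 hfh1 hfh2
  obtain ⟨z, st1, -, st2, heqn⟩ := hcollh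
  rcases st1 with h1 | h1 <;> rcases st2 with h2 | h2
  · rw [if_pos h1, if_pos h2, if_neg (fun ho => F.not_in_out hpts1 h1 ho),
      if_neg (fun ho => F.not_in_out hpts2 h2 ho)] at heqn
    have h00 := congrFun heqn 0
    simp only [Pi.add_apply, Pi.zero_apply, Frame.fourMom, Fin.cons_zero,
      add_zero, zero_add] at h00
    rw [hmhb1, hmhb2] at h00
    exact hmu (by linarith)
  · rw [if_pos h1, if_pos h2, if_neg (fun ho => F.not_in_out hpts1 h1 ho),
      if_neg (fun hi => F.not_in_out hpts2 hi h2)] at heqn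
    have h00 := congrFun heqn 0
    simp only [Pi.add_apply, Pi.zero_apply, Frame.fourMom, Fin.cons_zero,
      add_zero, zero_add] at h00
    rw [hmhb1, hmhb2] at h00
    exact hmu (by linarith)
  · rw [if_pos h1, if_pos h2, if_neg (fun hi => F.not_in_out hpts1 hi h1),
      if_neg (fun ho => F.not_in_out hpts2 h2 ho)] at heqn
    have h00 := congrFun heqn 0
    simp only [Pi.add_apply, Pi.zero_apply, Frame.fourMom, Fin.cons_zero,
      add_zero, zero_add] at h00
    rw [hmhb1, hmhb2] at h00
    exact hmu (by linarith)
  · rw [if_pos h1, if_pos h2, if_neg (fun hi => F.not_in_out hpts1 hi h1),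
      if_neg (fun hi => F.not_in_out hpts2 hi h2)] at heqn
    have h00 := congrFun heqn 0
    simp only [Pi.add_apply, Pi.zero_apply, Frame.fourMom, Fin.cons_zero,
      add_zero, zero_add] at h00
    rw [hmhb1, hmhb2] at h00
    exact hmu (by linarith)

end Frame

/-- **Lemma 1 (massless particles).**  Assume `BA`, `AxColl₃`, `Ax∀inecoll⁻`,
`AxMass` and `AxThEx⁻` (i.e. `DYN` without `AxSpd⁻`).  If `k`, `h` are inertial
observers and `b` an inertial particle with `v_k(b) < ∞`, `v_h(b) < ∞`,
`v_k(h) < ∞` and `v_h(k) < ∞`, then `m_k(b) = 0 ↔ m_h(b) = 0`. -/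
theorem massless_iff
    {Q : Type*} [Field Q] [LinearOrder Q] [IsStrictOrderedRing Q] {B : Type*} (F : Frame Q B)
    (hBA : F.BA) (hColl : F.AxColl3) (hIne : F.AxInecoll)
    (hMass : F.AxMass) (hThEx : F.AxThEx)
    (k h : B) (hk : k ∈ F.IOb) (hh : h ∈ F.IOb) (b : B) (hb : b ∈ F.Ip)
    (hfkb : F.finite k b) (hfhb : F.finite h b)
    (hfkh : F.finite k h) (hfhk : F.finite h k) :
    F.m k b = 0 ↔ F.m h b = 0 :=
  ⟨fun h0 => Frame.aux_mass_zero F hBA hColl hIne hMass k h hk hh b hb hfkb hfhb h0,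
   fun h0 => Frame.aux_mass_zero F hBA hColl hIne hMass h k hh hk b hb hfhb hfkb h0⟩
end
end

section
/- Assume the axioms BA and AxPh, and let k, h be inertial observers. Then there exist q ∈ Q with q > 0 and a Lorentz transformation L : Q⁴ → Q⁴ such that w_{kh}(x) − w_{kh}(0) = q·L(x) for all x ∈ Q⁴. -/
open scoped Classical

noncomputable section

private lemma esqrt_spec' {Q : Type*} [Field Q] [LinearOrder Q] [IsStrictOrderedRing Q] {x : Q}
    (h : ∃ y : Q, 0 ≤ y ∧ y ^ 2 = x) : 0 ≤ esqrt x ∧ esqrt x ^ 2 = x := by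
  rw [esqrt, dif_pos h]; exact h.choose_spec

set_option maxHeartbeats 1000000

/-- **Lemma 3(a) (decomposition, relativistic case).**  Assume `BA` and
`AxPh`.  For inertial observers `k`, `h` there are `q > 0` and a Lorentz
transformation `L` (a linear map preserving the Minkowski norm) with
`w_{kh}(x) − w_{kh}(0) = q·L(x)` for all `x`. -/
theorem worldview_decomposition_lorentz
    {Q : Type*} [Field Q] [LinearOrder Q] [IsStrictOrderedRing Q] {B : Type*} (F : Frame Q B)
    (hBA : F.BA) (hPh : F.AxPh)
    (k h : B) (hk : k ∈ F.IOb) (hh : h ∈ F.IOb) :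
    ∃ q : Q, 0 < q ∧ ∃ L : (Fin 4 → Q) →ₗ[Q] (Fin 4 → Q),
      (∀ x : Fin 4 → Q, minkNorm (L x) = minkNorm x) ∧
      ∀ x : Fin 4 → Q, F.w k h x - F.w k h 0 = q • L x := by
  obtain ⟨hE, -, hW, -⟩ := hBA
  obtain ⟨hbij, ⟨M, hM⟩, hwl⟩ := hW k hk h hh
  set m : Fin 4 → Fin 4 → Q := fun i => M (Pi.single i 1) with hm
  have hcomp : ∀ (x : Fin 4 → Q) (i : Fin 4), M x i =
      x 0 * m 0 i + x 1 * m 1 i + x 2 * m 2 i + x 3 * m 3 i := by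
    intro x i
    have hx : x = x 0 • (Pi.single 0 1 : Fin 4 → Q) + x 1 • (Pi.single 1 1 : Fin 4 → Q) +
        x 2 • (Pi.single 2 1 : Fin 4 → Q) + x 3 • (Pi.single 3 1 : Fin 4 → Q) := by
      funext j; fin_cases j <;> simp [Pi.single_apply]
    conv_lhs => rw [hx]
    simp [map_add, map_smul, hm]
  have hcone : ∀ v : Fin 4 → Q, v 1 ^ 2 + v 2 ^ 2 + v 3 ^ 2 = v 0 ^ 2 →
      (M v) 1 ^ 2 + (M v) 2 ^ 2 + (M v) 3 ^ 2 = (M v) 0 ^ 2 := by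
    intro v hv
    obtain ⟨p, hp, hvp, h0p⟩ := (hPh k hk v 0).mpr (by simpa using hv)
    have h1 : F.w k h v ∈ F.wl h p := by rw [← hwl p]; exact ⟨v, hvp, rfl⟩
    have h2 : F.w k h 0 ∈ F.wl h p := by rw [← hwl p]; exact ⟨0, h0p, rfl⟩
    have h3 := (hPh h hh (F.w k h v) (F.w k h 0)).mp ⟨p, hp, h1, h2⟩
    have h4 : ∀ i, F.w k h v i - F.w k h 0 i = M v i := by
      intro i; rw [hM v]; simp
    rw [← h4 0, ← h4 1, ← h4 2, ← h4 3]; exact h3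
  obtain ⟨s, hs⟩ := hE 2 (by norm_num)
  -- raw null-cone conditions
  have hA1 := hcone (Pi.single 0 1 + Pi.single 1 1) (by simp [Pi.single_apply])
  have hC1 := hcone (Pi.single 0 1 - Pi.single 1 1) (by simp [Pi.single_apply])
  have hA2 := hcone (Pi.single 0 1 + Pi.single 2 1) (by simp [Pi.single_apply])
  have hC2 := hcone (Pi.single 0 1 - Pi.single 2 1) (by simp [Pi.single_apply])
  have hA3 := hcone (Pi.single 0 1 + Pi.single 3 1) (by simp [Pi.single_apply])
  have hC3 := hcone (Pi.single 0 1 - Pi.single 3 1) (by simp [Pi.single_apply])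
  have hD12 := hcone (s • (Pi.single 0 1 : Fin 4 → Q) + Pi.single 1 1 + Pi.single 2 1)
    (by simp [Pi.single_apply]; linarith [hs])
  have hD13 := hcone (s • (Pi.single 0 1 : Fin 4 → Q) + Pi.single 1 1 + Pi.single 3 1)
    (by simp [Pi.single_apply]; linarith [hs])
  have hD23 := hcone (s • (Pi.single 0 1 : Fin 4 → Q) + Pi.single 2 1 + Pi.single 3 1)
    (by simp [Pi.single_apply]; linarith [hs])
  rw [map_add] at hA1 hA2 hA3
  rw [map_sub] at hC1 hC2 hC3
  rw [map_add, map_add, map_smul] at hD12 hD13 hD23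
  simp only [← hm, Pi.add_apply, Pi.sub_apply, Pi.smul_apply, smul_eq_mul]
    at hA1 hC1 hA2 hC2 hA3 hC3 hD12 hD13 hD23
  -- clean bilinear-form identities
  have hB01 : m 0 0 * m 1 0 - m 0 1 * m 1 1 - m 0 2 * m 1 2 - m 0 3 * m 1 3 = 0 := by
    linear_combination (hC1 - hA1) / 4
  have hB02 : m 0 0 * m 2 0 - m 0 1 * m 2 1 - m 0 2 * m 2 2 - m 0 3 * m 2 3 = 0 := by
    linear_combination (hC2 - hA2) / 4
  have hB03 : m 0 0 * m 3 0 - m 0 1 * m 3 1 - m 0 2 * m 3 2 - m 0 3 * m 3 3 = 0 := by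
    linear_combination (hC3 - hA3) / 4
  have hB11 : m 1 0 ^ 2 - m 1 1 ^ 2 - m 1 2 ^ 2 - m 1 3 ^ 2 =
      -(m 0 0 ^ 2 - m 0 1 ^ 2 - m 0 2 ^ 2 - m 0 3 ^ 2) := by
    linear_combination -(hA1 + hC1) / 2
  have hB22 : m 2 0 ^ 2 - m 2 1 ^ 2 - m 2 2 ^ 2 - m 2 3 ^ 2 =
      -(m 0 0 ^ 2 - m 0 1 ^ 2 - m 0 2 ^ 2 - m 0 3 ^ 2) := by
    linear_combination -(hA2 + hC2) / 2
  have hB33 : m 3 0 ^ 2 - m 3 1 ^ 2 - m 3 2 ^ 2 - m 3 3 ^ 2 =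
      -(m 0 0 ^ 2 - m 0 1 ^ 2 - m 0 2 ^ 2 - m 0 3 ^ 2) := by
    linear_combination -(hA3 + hC3) / 2
  have hB12 : m 1 0 * m 2 0 - m 1 1 * m 2 1 - m 1 2 * m 2 2 - m 1 3 * m 2 3 = 0 := by
    linear_combination (-1/2 : Q) * hD12
      - (m 0 0 ^ 2 - m 0 1 ^ 2 - m 0 2 ^ 2 - m 0 3 ^ 2) / 2 * hs
      - hB11 / 2 - hB22 / 2 - s * hB01 - s * hB02
  have hB13 : m 1 0 * m 3 0 - m 1 1 * m 3 1 - m 1 2 * m 3 2 - m 1 3 * m 3 3 = 0 := by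
    linear_combination (-1/2 : Q) * hD13
      - (m 0 0 ^ 2 - m 0 1 ^ 2 - m 0 2 ^ 2 - m 0 3 ^ 2) / 2 * hs
      - hB11 / 2 - hB33 / 2 - s * hB01 - s * hB03
  have hB23 : m 2 0 * m 3 0 - m 2 1 * m 3 1 - m 2 2 * m 3 2 - m 2 3 * m 3 3 = 0 := by
    linear_combination (-1/2 : Q) * hD23
      - (m 0 0 ^ 2 - m 0 1 ^ 2 - m 0 2 ^ 2 - m 0 3 ^ 2) / 2 * hs
      - hB22 / 2 - hB33 / 2 - s * hB02 - s * hB03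
  -- the quadratic form identity
  have hq : ∀ x : Fin 4 → Q,
      (M x) 0 ^ 2 - (M x) 1 ^ 2 - (M x) 2 ^ 2 - (M x) 3 ^ 2 =
      (m 0 0 ^ 2 - m 0 1 ^ 2 - m 0 2 ^ 2 - m 0 3 ^ 2) *
        (x 0 ^ 2 - x 1 ^ 2 - x 2 ^ 2 - x 3 ^ 2) := by
    intro x
    simp only [hcomp]
    linear_combination x 1 ^ 2 * hB11 + x 2 ^ 2 * hB22 + x 3 ^ 2 * hB33
      + 2 * x 0 * x 1 * hB01 + 2 * x 0 * x 2 * hB02 + 2 * x 0 * x 3 * hB03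
      + 2 * x 1 * x 2 * hB12 + 2 * x 1 * x 3 * hB13 + 2 * x 2 * x 3 * hB23
  clear hA1 hC1 hA2 hC2 hA3 hC3 hD12 hD13 hD23 hcone hcomp hs
  clear_value m
  set a : Q := m 0 0 ^ 2 - m 0 1 ^ 2 - m 0 2 ^ 2 - m 0 3 ^ 2 with ha
  -- a ≠ 0 using surjectivity of M
  have hMsurj : Function.Surjective M := by
    intro y
    obtain ⟨x, hx⟩ := hbij.2 (y + F.w k h 0)
    refine ⟨x, ?_⟩
    have : M x + F.w k h 0 = y + F.w k h 0 := by rw [← hM x, hx]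
    exact add_right_cancel this
  have hane : a ≠ 0 := by
    obtain ⟨x, hx⟩ := hMsurj (Pi.single 0 1)
    have := hq x
    rw [hx] at this
    simp [Pi.single_apply] at this
    intro h0
    rw [h0] at this
    simp at this
  -- a > 0
  have hapos : 0 < a := by
    rcases lt_trichotomy a 0 with hneg | h0 | hpos
    · exfalso
      by_cases huv : m 1 0 = 0 ∧ m 2 0 = 0
      · have hu2 : m 1 0 ^ 2 = 0 := by rw [huv.1]; ring
        nlinarith [hB11, sq_nonneg (m 1 1), sq_nonneg (m 1 2), sq_nonneg (m 1 3)]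
      · set u : Q := m 1 0 with hu
        set v : Q := m 2 0 with hv
        have key : (v * m 1 1 - u * m 2 1) ^ 2 + (v * m 1 2 - u * m 2 2) ^ 2 +
            (v * m 1 3 - u * m 2 3) ^ 2 =
            (u ^ 2 + v ^ 2) * a + (v * m 1 0 - u * m 2 0) ^ 2 := by
          linear_combination -(v ^ 2 * hB11) - u ^ 2 * hB22 + 2 * u * v * hB12
        have hz : (v * m 1 0 - u * m 2 0) ^ 2 = 0 := by rw [hu, hv]; ring
        have huv' : 0 < u ^ 2 + v ^ 2 := by
          rcases not_and_or.mp huv with h | h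
          · positivity
          · positivity
        nlinarith [key, sq_nonneg (v * m 1 1 - u * m 2 1),
            sq_nonneg (v * m 1 2 - u * m 2 2), sq_nonneg (v * m 1 3 - u * m 2 3)]
    · exact absurd h0 hane
    · exact hpos
  -- assemble
  obtain ⟨hq0, hq2⟩ := esqrt_spec' (Q := Q) (x := a)
    (by obtain ⟨y, hy⟩ := hE a hapos.le
        exact ⟨|y|, abs_nonneg y, by rw [sq_abs]; exact hy⟩)
  set q : Q := esqrt a with hqdef
  have hqne : q ≠ 0 := by
    intro h0; rw [h0] at hq2; simp at hq2; exact hane hq2.symm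
  have hqpos : 0 < q := lt_of_le_of_ne hq0 (Ne.symm hqne)
  refine ⟨q, hqpos, q⁻¹ • M, ?_, ?_⟩
  · intro x
    have hLx : ∀ i, (q⁻¹ • M) x i = q⁻¹ * M x i := by
      intro i; simp
    unfold minkNorm
    congr 1
    congr 1
    rw [hLx 0, hLx 1, hLx 2, hLx 3]
    have hinv : q⁻¹ ^ 2 * a = 1 := by
      field_simp
      linear_combination -hq2
    linear_combination (q⁻¹) ^ 2 * hq x + (x 0 ^ 2 - x 1 ^ 2 - x 2 ^ 2 - x 3 ^ 2) * hinv
  · intro x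
    funext i
    have : F.w k h x i - F.w k h 0 i = M x i := by rw [hM x]; simp
    simp only [Pi.sub_apply, Pi.smul_apply, LinearMap.smul_apply, smul_eq_mul]
    rw [this]
    field_simp
end
end

section
/- Assume the axioms BA and AxAbsSim, and let k, h be inertial observers. Then there exist q ∈ Q with q > 0 and a time-preserving linear transformation L : Q⁴ → Q⁴ such that w_{kh}(x) − w_{kh}(0) = q·L(x) for all x ∈ Q⁴. -/
open scoped Classical

noncomputable section

/-- **Lemma 3(b) (decomposition, Newtonian case).**  Assume `BA` and
`AxAbsSim`.  For inertial observers `k`, `h` there are `q > 0` and a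
time-preserving linear transformation `L` (i.e. `|(L x)₁| = |x₁|`) with
`w_{kh}(x) − w_{kh}(0) = q·L(x)` for all `x`. -/
theorem worldview_decomposition_time_preserving
    {Q : Type*} [Field Q] [LinearOrder Q] [IsStrictOrderedRing Q] {B : Type*} (F : Frame Q B)
    (hBA : F.BA) (hAbs : F.AxAbsSim)
    (k h : B) (hk : k ∈ F.IOb) (hh : h ∈ F.IOb) :
    ∃ q : Q, 0 < q ∧ ∃ L : (Fin 4 → Q) →ₗ[Q] (Fin 4 → Q),
      (∀ x : Fin 4 → Q, |(L x) 0| = |x 0|) ∧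
      ∀ x : Fin 4 → Q, F.w k h x - F.w k h 0 = q • L x := by
  obtain ⟨-, -, hW, -⟩ := hBA
  obtain ⟨-, ⟨M, hM⟩, -⟩ := hW k hk h hh
  set e0 : Fin 4 → Q := Pi.single 0 1 with he0
  set a : Q := (M e0) 0 with ha'
  have habs := hAbs k hk h hh
  have hsub : ∀ x : Fin 4 → Q, F.w k h x - F.w k h 0 = M x := by
    intro x
    rw [hM x, hM 0, map_zero]
    abel
  have key : ∀ x : Fin 4 → Q, (M x) 0 = a * x 0 := by
    intro x
    set z : Fin 4 → Q := x - x 0 • e0 with hz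
    have hz0 : z 0 = 0 := by simp [hz, he0]
    have hwz : (F.w k h z) 0 = (F.w k h 0) 0 :=
      (habs z 0).mpr (by simp [hz0])
    have hMz : (M z) 0 = 0 := by
      have := hwz
      rw [hM z, hM 0, map_zero] at this
      simpa using this
    have hx : x = z + x 0 • e0 := by simp [hz]
    have hMx : M x = M z + x 0 • M e0 := by
      rw [← map_smul, ← map_add]
      exact congrArg M hx
    rw [hMx]
    simp [hMz, ha', mul_comm]
  have ha : a ≠ 0 := by
    intro h0
    have hMe : (M e0) 0 = (M 0) 0 := by simp [← ha', h0]
    have : (F.w k h e0) 0 = (F.w k h 0) 0 := by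
      rw [hM e0, hM 0]; simp [Pi.add_apply, hMe]
    have := (habs e0 0).mp this
    simp [he0] at this
  refine ⟨|a|, abs_pos.mpr ha, |a|⁻¹ • M, ?_, ?_⟩
  · intro x
    simp [key x, abs_mul, abs_inv, abs_abs,
      inv_mul_cancel_left₀ (abs_ne_zero.mpr ha), mul_comm]
    rw [mul_assoc, mul_inv_cancel₀ (abs_ne_zero.mpr ha), mul_one]
  · intro x
    rw [hsub x]
    simp [smul_smul, mul_inv_cancel₀ (abs_ne_zero.mpr ha)]
end
end

section
/- Assume the axioms BA and AxPh. Then for all inertial observers k and h, the speed v_k(h) is finite and v_k(h) < 1 (there are no faster-than-light inertial observers). -/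
open scoped Classical

noncomputable section

theorem esqrt_lt_one_aux {Q : Type*} [Field Q] [LinearOrder Q] [IsStrictOrderedRing Q] (hE : AxEField Q) {x : Q}
    (h0 : 0 ≤ x) (h1 : x < 1) : esqrt x < 1 := by
  obtain ⟨y, hy⟩ := hE x h0
  have hex : ∃ z : Q, 0 ≤ z ∧ z ^ 2 = x := ⟨|y|, abs_nonneg y, by rw [sq_abs, hy]⟩
  rw [esqrt, dif_pos hex]
  obtain ⟨hz0, hz2⟩ := hex.choose_spec
  nlinarith [hz0, hz2]

set_option maxHeartbeats 1000000 in
theorem core_lemma {Q : Type*} [Field Q] [LinearOrder Q] [IsStrictOrderedRing Q]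
    (p0 p1 p2 p3 q0 q1 q2 q3 r0 r1 r2 r3 σ : Q)
    (hσ : σ ^ 2 * 2 = 1)
    (E1 : (p1+q1)^2+(p2+q2)^2+(p3+q3)^2 = (p0+q0)^2)
    (E2 : (p1-q1)^2+(p2-q2)^2+(p3-q3)^2 = (p0-q0)^2)
    (E3 : (p1+r1)^2+(p2+r2)^2+(p3+r3)^2 = (p0+r0)^2)
    (E4 : (p1-r1)^2+(p2-r2)^2+(p3-r3)^2 = (p0-r0)^2)
    (E5 : (p1+σ*q1+σ*r1)^2+(p2+σ*q2+σ*r2)^2+(p3+σ*q3+σ*r3)^2 = (p0+σ*q0+σ*r0)^2)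
    (E6 : (p1-σ*q1-σ*r1)^2+(p2-σ*q2-σ*r2)^2+(p3-σ*q3-σ*r3)^2 = (p0-σ*q0-σ*r0)^2)
    (hc : p0^2 ≤ p1^2+p2^2+p3^2) :
    ∃ c0 c1 : Q, ¬(c0 = 0 ∧ c1 = 0) ∧ c0*q0 + c1*r0 = 0 ∧ c0*q1 + c1*r1 = 0 ∧
      c0*q2 + c1*r2 = 0 ∧ c0*q3 + c1*r3 = 0 := by
  have hsum1 : p1^2+p2^2+p3^2 + (q1^2+q2^2+q3^2) = p0^2 + q0^2 := by
    linear_combination (E1+E2)/2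
  have hsum2 : p1^2+p2^2+p3^2 + (r1^2+r2^2+r3^2) = p0^2 + r0^2 := by
    linear_combination (E3+E4)/2
  have h1 : q1^2+q2^2+q3^2 ≤ q0^2 := by linarith
  have h2 : r1^2+r2^2+r3^2 ≤ r0^2 := by linarith
  have h3 : q1*r1+q2*r2+q3*r3 = q0*r0 := by
    linear_combination (E5 + E6)/2 - (σ^2/2)*(E1+E2+E3+E4) +
      (p1^2+p2^2+p3^2-p0^2 - (q1*r1+q2*r2+q3*r3 - q0*r0))*hσ
  clear E1 E2 E3 E4 E5 E6 hσ hsum1 hsum2 hc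
  by_cases hq0 : q0 = 0
  · refine ⟨1, 0, by simp, ?_, ?_, ?_, ?_⟩ <;> rw [hq0] at h1
    · simp [hq0]
    · have : q1^2 = 0 := le_antisymm (by linarith [sq_nonneg q2, sq_nonneg q3]) (sq_nonneg q1)
      simpa using sq_eq_zero_iff.mp this
    · have : q2^2 = 0 := le_antisymm (by linarith [sq_nonneg q1, sq_nonneg q3]) (sq_nonneg q2)
      simpa using sq_eq_zero_iff.mp this
    · have : q3^2 = 0 := le_antisymm (by linarith [sq_nonneg q1, sq_nonneg q2]) (sq_nonneg q3)
      simpa using sq_eq_zero_iff.mp this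
  by_cases hr0 : r0 = 0
  · refine ⟨0, 1, by simp, ?_, ?_, ?_, ?_⟩ <;> rw [hr0] at h2
    · simp [hr0]
    · have : r1^2 = 0 := le_antisymm (by linarith [sq_nonneg r2, sq_nonneg r3]) (sq_nonneg r1)
      simpa using sq_eq_zero_iff.mp this
    · have : r2^2 = 0 := le_antisymm (by linarith [sq_nonneg r1, sq_nonneg r3]) (sq_nonneg r2)
      simpa using sq_eq_zero_iff.mp this
    · have : r3^2 = 0 := le_antisymm (by linarith [sq_nonneg r1, sq_nonneg r2]) (sq_nonneg r3)
      simpa using sq_eq_zero_iff.mp this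
  · have hq0p : 0 < q0^2 := by positivity
    have hr0p : 0 < r0^2 := by positivity
    have hCS : (q1*r1+q2*r2+q3*r3)^2 ≤ (q1^2+q2^2+q3^2)*(r1^2+r2^2+r3^2) := by
      nlinarith [sq_nonneg (q1*r2-q2*r1), sq_nonneg (q1*r3-q3*r1), sq_nonneg (q2*r3-q3*r2)]
    rw [h3] at hCS
    have hn2nn : 0 ≤ r1^2+r2^2+r3^2 := by positivity
    have hn1nn : 0 ≤ q1^2+q2^2+q3^2 := by positivity
    have nq : q1^2+q2^2+q3^2 = q0^2 := by nlinarith [mul_le_mul_of_nonneg_right h1 hn2nn]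
    have nr : r1^2+r2^2+r3^2 = r0^2 := by nlinarith [mul_le_mul_of_nonneg_left h2 hn1nn]
    have hzero : (r0*q1 - q0*r1)^2 + (r0*q2 - q0*r2)^2 + (r0*q3 - q0*r3)^2 = 0 := by
      linear_combination r0^2*nq + q0^2*nr - 2*q0*r0*h3
    refine ⟨r0, -q0, fun hcon => hr0 hcon.1, by ring, ?_, ?_, ?_⟩
    · have : (r0*q1 - q0*r1)^2 = 0 :=
        le_antisymm (by linarith [sq_nonneg (r0*q2 - q0*r2), sq_nonneg (r0*q3 - q0*r3)]) (sq_nonneg _)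
      have := sq_eq_zero_iff.mp this
      linarith [this]
    · have : (r0*q2 - q0*r2)^2 = 0 :=
        le_antisymm (by linarith [sq_nonneg (r0*q1 - q0*r1), sq_nonneg (r0*q3 - q0*r3)]) (sq_nonneg _)
      have := sq_eq_zero_iff.mp this
      linarith [this]
    · have : (r0*q3 - q0*r3)^2 = 0 :=
        le_antisymm (by linarith [sq_nonneg (r0*q1 - q0*r1), sq_nonneg (r0*q2 - q0*r2)]) (sq_nonneg _)
      have := sq_eq_zero_iff.mp this
      linarith [this]

/-- **Corollary (no FTL inertial observers).**  Assume `BA` and `AxPh`.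
For all inertial observers `k`, `h`, the speed `v_k(h)` is finite and
`v_k(h) < 1`. -/
theorem no_ftl_observers
    {Q : Type*} [Field Q] [LinearOrder Q] [IsStrictOrderedRing Q] {B : Type*} (F : Frame Q B)
    (hBA : F.BA) (hPh : F.AxPh)
    (k h : B) (hk : k ∈ F.IOb) (hh : h ∈ F.IOb) :
    F.finite k h ∧ F.speed k h < 1 := by
  obtain ⟨hE, hLax, hW, hS⟩ := hBA
  obtain ⟨hbij, ⟨L, hLf⟩, himg⟩ := hW h hh k hk
  have hLinj : Function.Injective L := by
    intro p q hpq
    apply hbij.1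
    rw [hLf p, hLf q, hpq]
  -- lightcone preservation
  have key : ∀ v : Fin 4 → Q, v 1 ^ 2 + v 2 ^ 2 + v 3 ^ 2 = v 0 ^ 2 →
      L v 1 ^ 2 + L v 2 ^ 2 + L v 3 ^ 2 = L v 0 ^ 2 := by
    intro v hv
    obtain ⟨p, hp, hv1, hv2⟩ := (hPh h hh v 0).mpr (by simpa using hv)
    have h1 : F.w h k v ∈ F.wl k p := by rw [← himg p]; exact ⟨v, hv1, rfl⟩
    have h2 : F.w h k 0 ∈ F.wl k p := by rw [← himg p]; exact ⟨0, hv2, rfl⟩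
    have heq := (hPh k hk (F.w h k v) (F.w h k 0)).mp ⟨p, hp, h1, h2⟩
    have hfv : ∀ i, F.w h k v i - F.w h k 0 i = L v i := by
      intro i
      rw [hLf v]
      simp
    rw [hfv 0, hfv 1, hfv 2, hfv 3] at heq
    exact heq
  -- the six null-vector equations
  obtain ⟨σ, hσ2⟩ := hE (1/2) (by norm_num)
  have hσ : σ ^ 2 * 2 = 1 := by rw [hσ2]; norm_num
  have E1 := key ![(1:Q),1,0,0] (by norm_num [Matrix.cons_val_two, Matrix.cons_val_three])
  have E2 := key ![(1:Q),-1,0,0] (by norm_num [Matrix.cons_val_two, Matrix.cons_val_three])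
  have E3 := key ![(1:Q),0,1,0] (by norm_num [Matrix.cons_val_two, Matrix.cons_val_three])
  have E4 := key ![(1:Q),0,-1,0] (by norm_num [Matrix.cons_val_two, Matrix.cons_val_three])
  have E5 := key ![(1:Q),σ,σ,0] (by norm_num [Matrix.cons_val_two, Matrix.cons_val_three]; linear_combination hσ)
  have E6 := key ![(1:Q),-σ,-σ,0] (by norm_num [Matrix.cons_val_two, Matrix.cons_val_three]; linear_combination hσ)
  have d1 : (![(1:Q),1,0,0] : Fin 4 → Q) = ![1,0,0,0] + ![0,1,0,0] := by
    funext i; fin_cases i <;> norm_num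
  have d2 : (![(1:Q),-1,0,0] : Fin 4 → Q) = ![1,0,0,0] - ![0,1,0,0] := by
    funext i; fin_cases i <;> norm_num
  have d3 : (![(1:Q),0,1,0] : Fin 4 → Q) = ![1,0,0,0] + ![0,0,1,0] := by
    funext i; fin_cases i <;> norm_num
  have d4 : (![(1:Q),0,-1,0] : Fin 4 → Q) = ![1,0,0,0] - ![0,0,1,0] := by
    funext i; fin_cases i <;> norm_num
  have d5 : (![(1:Q),σ,σ,0] : Fin 4 → Q) = ![1,0,0,0] + σ • ![0,1,0,0] + σ • ![0,0,1,0] := by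
    funext i; fin_cases i <;> simp
  have d6 : (![(1:Q),-σ,-σ,0] : Fin 4 → Q) = ![1,0,0,0] - σ • ![0,1,0,0] - σ • ![0,0,1,0] := by
    funext i; fin_cases i <;> simp
  rw [d1, map_add] at E1
  rw [d2, map_sub] at E2
  rw [d3, map_add] at E3
  rw [d4, map_sub] at E4
  rw [d5, map_add, map_add, map_smul, map_smul] at E5
  rw [d6, map_sub, map_sub, map_smul, map_smul] at E6
  simp only [Pi.add_apply, Pi.sub_apply, Pi.smul_apply, smul_eq_mul] at E1 E2 E3 E4 E5 E6
  -- the core inequality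
  have hcore : L ![(1:Q),0,0,0] 1 ^ 2 + L ![(1:Q),0,0,0] 2 ^ 2 + L ![(1:Q),0,0,0] 3 ^ 2
      < L ![(1:Q),0,0,0] 0 ^ 2 := by
    by_contra hc
    push_neg at hc
    obtain ⟨c0, c1, hne, g0, g1, g2, g3⟩ :=
      core_lemma (L ![(1:Q),0,0,0] 0) (L ![(1:Q),0,0,0] 1) (L ![(1:Q),0,0,0] 2)
        (L ![(1:Q),0,0,0] 3) (L ![(0:Q),1,0,0] 0) (L ![(0:Q),1,0,0] 1) (L ![(0:Q),1,0,0] 2)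
        (L ![(0:Q),1,0,0] 3) (L ![(0:Q),0,1,0] 0) (L ![(0:Q),0,1,0] 1) (L ![(0:Q),0,1,0] 2)
        (L ![(0:Q),0,1,0] 3) σ hσ E1 E2 E3 E4 E5 E6 hc
    have hker : L (c0 • ![(0:Q),1,0,0] + c1 • ![(0:Q),0,1,0]) = 0 := by
      rw [map_add, map_smul, map_smul]
      funext i
      fin_cases i <;>
        simp only [Pi.add_apply, Pi.smul_apply, smul_eq_mul, Pi.zero_apply]
      · exact g0
      · exact g1
      · exact g2
      · exact g3
    have hker0 : c0 • ![(0:Q),1,0,0] + c1 • ![(0:Q),0,1,0] = 0 := by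
      apply hLinj
      rw [hker, map_zero]
    have hc0 : c0 = 0 := by
      have := congrFun hker0 1
      simpa using this
    have hc1 : c1 = 0 := by
      have := congrFun hker0 2
      simpa using this
    exact hne ⟨hc0, hc1⟩
  clear E1 E2 E3 E4 E5 E6 d1 d2 d3 d4 d5 d6 hσ hσ2 key
  -- two points on h's worldline in h's own frame
  obtain ⟨x, hx, y, hy, hxy⟩ := (hLax h hh h (Or.inr hh)).2
  obtain ⟨hx1, hx2, hx3⟩ := hS h hh x hx
  obtain ⟨hy1, hy2, hy3⟩ := hS h hh y hy
  have hd : y 0 - x 0 ≠ 0 := by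
    intro h0
    apply hxy
    funext i
    fin_cases i
    · show x 0 = y 0; linarith
    · show x 1 = y 1; rw [hx1, hy1]
    · show x 2 = y 2; rw [hx2, hy2]
    · show x 3 = y 3; rw [hx3, hy3]
  have hyx : y - x = (y 0 - x 0) • ![(1:Q),0,0,0] := by
    funext i
    fin_cases i <;> simp only [Pi.sub_apply, Pi.smul_apply, smul_eq_mul]
    · show y 0 - x 0 = (y 0 - x 0) * (![(1:Q),0,0,0] 0); norm_num
    · show y 1 - x 1 = (y 0 - x 0) * (![(1:Q),0,0,0] 1); rw [hx1, hy1]; norm_num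
    · show y 2 - x 2 = (y 0 - x 0) * (![(1:Q),0,0,0] 2); rw [hx2, hy2]; norm_num [Matrix.cons_val_two, Matrix.cons_val_three]
    · show y 3 - x 3 = (y 0 - x 0) * (![(1:Q),0,0,0] 3); rw [hx3, hy3]; norm_num [Matrix.cons_val_two, Matrix.cons_val_three]
  have hfyx : F.w h k y - F.w h k x = (y 0 - x 0) • L ![(1:Q),0,0,0] := by
    have h1 : F.w h k y - F.w h k x = L (y - x) := by
      rw [hLf y, hLf x, map_sub]
      abel
    rw [h1, hyx, map_smul]
  have hfx : F.w h k x ∈ F.wl k h := by rw [← himg h]; exact ⟨x, hx, rfl⟩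
  have hfy : F.w h k y ∈ F.wl k h := by rw [← himg h]; exact ⟨y, hy, rfl⟩
  have hA0 : L ![(1:Q),0,0,0] 0 ≠ 0 := by
    intro h0
    rw [h0] at hcore
    simp only [ne_eq, OfNat.ofNat_ne_zero, not_false_eq_true, zero_pow] at hcore
    linarith [sq_nonneg (L ![(1:Q),0,0,0] 1), sq_nonneg (L ![(1:Q),0,0,0] 2),
      sq_nonneg (L ![(1:Q),0,0,0] 3)]
  have hT0 : F.w h k y 0 - F.w h k x 0 = (y 0 - x 0) * L ![(1:Q),0,0,0] 0 := by
    have := congrFun hfyx 0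
    simpa using this
  have hT0ne : F.w h k y 0 - F.w h k x 0 ≠ 0 := by
    rw [hT0]; exact mul_ne_zero hd hA0
  -- the line containing wl k h
  obtain ⟨a, b, hab, hsub⟩ := (hLax k hk h (Or.inr hh)).1
  obtain ⟨α, hα⟩ := hsub hfx
  obtain ⟨β, hβ⟩ := hsub hfy
  have hdiffαβ : ∀ i, F.w h k y i - F.w h k x i = (β - α) * (b i - a i) := by
    intro i
    rw [hα, hβ]
    simp only [Pi.add_apply, Pi.smul_apply, Pi.sub_apply, smul_eq_mul]
    ring
  have hβα : β - α ≠ 0 := by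
    intro h'
    apply hT0ne
    rw [hdiffαβ 0, h', zero_mul]
  have hw0 : b 0 - a 0 ≠ 0 := by
    intro h'
    apply hT0ne
    rw [hdiffαβ 0, h', mul_zero]
  -- finiteness
  have hfin : F.finite k h := by
    intro p hp q hq hne heq
    apply hne
    obtain ⟨γ, hγ⟩ := hsub hp
    obtain ⟨δ, hδ⟩ := hsub hq
    have h0 : p 0 - q 0 = (γ - δ) * (b 0 - a 0) := by
      rw [hγ, hδ]
      simp only [Pi.add_apply, Pi.smul_apply, Pi.sub_apply, smul_eq_mul]
      ring
    have hγδ : γ = δ := by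
      have h1 : (γ - δ) * (b 0 - a 0) = 0 := by rw [← h0, heq]; ring
      rcases mul_eq_zero.mp h1 with h2 | h2
      · linarith [sub_eq_zero.mp h2]
      · exact absurd h2 hw0
    rw [hγ, hδ, hγδ]
  refine ⟨hfin, ?_⟩
  -- speed
  have hba : ∀ i, b i - a i = ((y 0 - x 0) / (β - α)) * L ![(1:Q),0,0,0] i := by
    intro i
    have h1 := hdiffαβ i
    have h2 : F.w h k y i - F.w h k x i = (y 0 - x 0) * L ![(1:Q),0,0,0] i := by
      have := congrFun hfyx i
      simpa using this
    rw [h2] at h1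
    field_simp
    linarith [h1]
  have hc2 : (0:Q) < ((y 0 - x 0) / (β - α)) ^ 2 := by
    have : (y 0 - x 0) / (β - α) ≠ 0 := div_ne_zero hd hβα
    positivity
  have hlt : (b 1 - a 1) ^ 2 + (b 2 - a 2) ^ 2 + (b 3 - a 3) ^ 2 < (b 0 - a 0) ^ 2 := by
    rw [hba 0, hba 1, hba 2, hba 3]
    calc (((y 0 - x 0) / (β - α)) * L ![(1:Q),0,0,0] 1) ^ 2
          + (((y 0 - x 0) / (β - α)) * L ![(1:Q),0,0,0] 2) ^ 2
          + (((y 0 - x 0) / (β - α)) * L ![(1:Q),0,0,0] 3) ^ 2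
        = ((y 0 - x 0) / (β - α)) ^ 2 * (L ![(1:Q),0,0,0] 1 ^ 2
            + L ![(1:Q),0,0,0] 2 ^ 2 + L ![(1:Q),0,0,0] 3 ^ 2) := by ring
      _ < ((y 0 - x 0) / (β - α)) ^ 2 * L ![(1:Q),0,0,0] 0 ^ 2 :=
          mul_lt_mul_of_pos_left hcore hc2
      _ = (((y 0 - x 0) / (β - α)) * L ![(1:Q),0,0,0] 0) ^ 2 := by ring
  have hex : ∃ x', x' ∈ F.wl k h ∧ ∃ y', y' ∈ F.wl k h ∧ x' 0 ≠ y' 0 :=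
    ⟨F.w h k y, hfy, F.w h k x, hfx, sub_ne_zero.mp hT0ne⟩
  simp only [Frame.speed, Frame.vvec, enorm3, normSq3]
  rw [dif_pos hex]
  obtain ⟨γ, hγ⟩ := hsub hex.choose_spec.1
  obtain ⟨δ, hδ⟩ := hsub hex.choose_spec.2.choose_spec.1
  have hne0 := hex.choose_spec.2.choose_spec.2
  have hdiff' : ∀ i, hex.choose i - hex.choose_spec.2.choose i = (γ - δ) * (b i - a i) := by
    intro i
    have e1 := congrFun hγ i
    have e2 := congrFun hδ i
    simp only [Pi.add_apply, Pi.smul_apply, Pi.sub_apply, smul_eq_mul] at e1 e2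
    rw [e1, e2]
    ring
  have hγδ : γ - δ ≠ 0 := by
    intro h'
    apply hne0
    have h1 := hdiff' 0
    rw [h', zero_mul] at h1
    linarith [sub_eq_zero.mp h1]
  have hval : ∀ i : Fin 3, (hex.choose i.succ - hex.choose_spec.2.choose i.succ)
      / (hex.choose 0 - hex.choose_spec.2.choose 0) = (b i.succ - a i.succ) / (b 0 - a 0) := by
    intro i
    rw [hdiff' i.succ, hdiff' 0, mul_div_mul_left _ _ hγδ]
  rw [hval 0, hval 1, hval 2]
  have hs0 : ((0:Fin 3)).succ = (1 : Fin 4) := by decide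
  have hs1 : ((1:Fin 3)).succ = (2 : Fin 4) := by decide
  have hs2 : ((2:Fin 3)).succ = (3 : Fin 4) := by decide
  rw [hs0, hs1, hs2]
  have hnorm : ((b 1 - a 1) / (b 0 - a 0)) ^ 2 + ((b 2 - a 2) / (b 0 - a 0)) ^ 2
      + ((b 3 - a 3) / (b 0 - a 0)) ^ 2
      = ((b 1 - a 1) ^ 2 + (b 2 - a 2) ^ 2 + (b 3 - a 3) ^ 2) / (b 0 - a 0) ^ 2 := by
    field_simp
  rw [hnorm]
  apply esqrt_lt_one_aux hE
  · positivity
  · rw [div_lt_one (by positivity)]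
    exact hlt
end
end

section
/- Assume the axioms BA and AxAbsSim. Then for all inertial observers k and h, the speed v_k(h) is finite (no inertial observer moves with infinite speed relative to another). -/
open scoped Classical

noncomputable section

/-- **Corollary (no infinitely fast inertial observers).**  Assume `BA` and
`AxAbsSim`.  For all inertial observers `k`, `h`, the speed `v_k(h)` is
finite. -/
theorem no_infinitely_fast_observers
    {Q : Type*} [Field Q] [LinearOrder Q] [IsStrictOrderedRing Q] {B : Type*} (F : Frame Q B)
    (hBA : F.BA) (hAbs : F.AxAbsSim)
    (k h : B) (hk : k ∈ F.IOb) (hh : h ∈ F.IOb) :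
    F.finite k h := by
  obtain ⟨_, _, hW, hSelf⟩ := hBA
  intro x hx y hy hxy h0
  obtain ⟨hbij, _, himg⟩ := hW k hk h hh
  have hx' : F.w k h x ∈ F.wl h h := by rw [← himg h]; exact ⟨x, hx, rfl⟩
  have hy' : F.w k h y ∈ F.wl h h := by rw [← himg h]; exact ⟨y, hy, rfl⟩
  have hsx := hSelf h hh _ hx'
  have hsy := hSelf h hh _ hy'
  have h0' : (F.w k h x) 0 = (F.w k h y) 0 :=
    (hAbs k hk h hh x y).mpr h0
  have heq : F.w k h x = F.w k h y := by
    funext i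
    fin_cases i <;>
      simp only [Fin.isValue] <;>
      [exact h0'; rw [show ((⟨1,by norm_num⟩:Fin 4)) = 1 from rfl, hsx.1, hsy.1];
       rw [show ((⟨2,by norm_num⟩:Fin 4)) = 2 from rfl, hsx.2.1, hsy.2.1];
       rw [show ((⟨3,by norm_num⟩:Fin 4)) = 3 from rfl, hsx.2.2, hsy.2.2]]
  exact hxy (hbij.1 heq)
end
end

section
/- Let F be a Euclidean field and let f : F → F be a quadratic function, i.e. f(x) = a·x² + b·x + c for some a, b, c ∈ F. If p, q ∈ F satisfy p < q, f(p) > 0 and f(q) < 0, then f has a root strictly between p and q: there is r ∈ F with f(r) = 0 and p < r < q. -/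
/-- **Bolzano's theorem for quadratic functions over a Euclidean field.**
Let `F` be a Euclidean field (a linearly ordered field in which every
nonnegative element has a square root) and `f(x) = a·x² + b·x + c` a
quadratic function.  If `p < q`, `f(p) > 0` and `f(q) < 0`, then `f` has a
root strictly between `p` and `q`. -/
theorem quadratic_bolzano
    {F : Type*} [Field F] [LinearOrder F] [IsStrictOrderedRing F]
    (hE : ∀ x : F, 0 ≤ x → ∃ y : F, y ^ 2 = x)
    (f : F → F) (a b c : F) (hf : ∀ x : F, f x = a * x ^ 2 + b * x + c)
    (p q : F) (hpq : p < q) (hp : 0 < f p) (hq : f q < 0) :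
    ∃ r : F, f r = 0 ∧ p < r ∧ r < q := by
  rw [hf] at hp hq
  by_cases ha : a = 0
  · subst ha
    simp only [zero_mul, zero_add] at hp hq
    have hb : b < 0 := by nlinarith
    have hb0 : b ≠ 0 := hb.ne
    refine ⟨-c / b, ?_, ?_, ?_⟩
    · rw [hf]; field_simp; ring
    · rw [lt_div_iff_of_neg hb]; nlinarith
    · rw [div_lt_iff_of_neg hb]; nlinarith
  · -- discriminant is nonnegative
    have hdisc : (0:F) ≤ b ^ 2 - 4 * a * c := by
      by_contra h
      push_neg at h
      rcases lt_or_gt_of_ne ha with h' | h' <;>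
        nlinarith [sq_nonneg (2*a*p+b), sq_nonneg (2*a*q+b)]
    obtain ⟨s, hs⟩ := hE _ hdisc
    set r₁ := (-b + s) / (2 * a) with hr₁
    set r₂ := (-b - s) / (2 * a) with hr₂
    have h2a : (2 * a) ≠ 0 := by simpa using ha
    have hfac : ∀ x : F, a * x ^ 2 + b * x + c = a * (x - r₁) * (x - r₂) := by
      intro x
      rw [hr₁, hr₂]
      field_simp
      ring_nf
      linear_combination hs
    rw [hfac] at hp hq
    have ha2 : 0 < a * a := mul_self_pos.2 ha
    by_cases h1 : p < r₁ ∧ r₁ < q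
    · exact ⟨r₁, by rw [hf, hfac]; ring, h1.1, h1.2⟩
    · rw [not_and_or, not_lt, not_lt] at h1
      have hA : 0 ≤ (p - r₁) * (q - r₁) := by
        rcases h1 with h1 | h1 <;> nlinarith
      refine ⟨r₂, by rw [hf, hfac]; ring, ?_⟩
      by_contra h2
      rw [not_and_or, not_lt, not_lt] at h2
      have hB : 0 ≤ (p - r₂) * (q - r₂) := by
        rcases h2 with h2 | h2 <;> nlinarith
      have key : 0 ≤ a * a * ((p - r₁) * (q - r₁) * ((p - r₂) * (q - r₂))) :=
        mul_nonneg ha2.le (mul_nonneg hA hB)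
      have hm := mul_pos hp (neg_pos.2 hq)
      have e : (a * (p - r₁) * (p - r₂)) * -(a * (q - r₁) * (q - r₂)) =
          -(a * a * ((p - r₁) * (q - r₁) * ((p - r₂) * (q - r₂)))) := by ring
      rw [e] at hm
      linarith
end

section
/- Let F be a Euclidean field, let f₁, f₂ : F → F be quadratic functions (fᵢ(x) = aᵢ·x² + bᵢ·x + cᵢ), let s ∈ F, and let f : F → F be a function satisfying f(x) = f₁(x) for all x ≤ s and f(x) = f₂(x) for all x ≥ s. If p, q ∈ F satisfy p < q, f(p) > 0 and f(q) < 0, then f has a root strictly between p and q: there is r ∈ F with f(r) = 0 and p < r < q. -/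
/-- Bolzano for a quadratic with positive leading coefficient. -/
theorem quad_bolzano_pos
    {F : Type*} [Field F] [LinearOrder F] [IsStrictOrderedRing F]
    (hE : ∀ x : F, 0 ≤ x → ∃ y : F, y ^ 2 = x)
    (a b c p q : F) (ha : 0 < a) (hpq : p < q)
    (hp : 0 < a * p ^ 2 + b * p + c) (hq : a * q ^ 2 + b * q + c < 0) :
    ∃ r : F, a * r ^ 2 + b * r + c = 0 ∧ p < r ∧ r < q := by
  have hdisc : 0 ≤ b ^ 2 - 4 * a * c := by nlinarith [sq_nonneg (2 * a * q + b)]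
  obtain ⟨y, hy⟩ := hE _ hdisc
  have hd0 : 0 ≤ |y| := abs_nonneg y
  have hd2 : |y| ^ 2 = b ^ 2 - 4 * a * c := by rw [sq_abs]; exact hy
  set d := |y| with hdd
  clear_value d
  clear hy hdd
  have h2a : (0 : F) < 2 * a := by linarith
  have h2a' : (2 * a) ≠ 0 := ne_of_gt h2a
  -- bounds on 2aq + b from g(q) < 0
  have hqb1 : -d < 2 * a * q + b := by nlinarith
  have hqb2 : 2 * a * q + b < d := by nlinarith
  -- from g(p) > 0 and 2ap+b < 2aq+b < d we get 2ap+b < -d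
  have hpsq : d ^ 2 < (2 * a * p + b) ^ 2 := by nlinarith
  have hpb0 : 2 * a * p + b < d := by nlinarith
  have hpb : 2 * a * p + b < -d := by nlinarith
  set r := (-b - d) / (2 * a) with hr
  have hrr : 2 * a * r = -b - d := by rw [hr, mul_div_cancel₀ _ h2a']
  have hrb : 2 * a * r + b = -d := by linarith
  refine ⟨r, ?_, ?_, ?_⟩
  · have h4 : 4 * a * (a * r ^ 2 + b * r + c) = 0 := by
      linear_combination (2 * a * r + b - d) * hrb + hd2
    have ha4 : (4 * a) ≠ 0 := by positivity
    exact (mul_eq_zero.mp h4).resolve_left ha4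
  · have : 2 * a * p < 2 * a * r := by linarith
    exact lt_of_mul_lt_mul_left this (by linarith)
  · have : 2 * a * r < 2 * a * q := by linarith
    exact lt_of_mul_lt_mul_left this (by linarith)

/-- Bolzano for a single quadratic over a Euclidean field. -/
theorem quad_bolzano
    {F : Type*} [Field F] [LinearOrder F] [IsStrictOrderedRing F]
    (hE : ∀ x : F, 0 ≤ x → ∃ y : F, y ^ 2 = x)
    (a b c p q : F) (hpq : p < q)
    (hp : 0 < a * p ^ 2 + b * p + c) (hq : a * q ^ 2 + b * q + c < 0) :
    ∃ r : F, a * r ^ 2 + b * r + c = 0 ∧ p < r ∧ r < q := by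
  rcases lt_trichotomy a 0 with ha | ha | ha
  · -- reflect: h(x) = -g(-x) has positive leading coefficient
    obtain ⟨r', hr', h1, h2⟩ :=
      quad_bolzano_pos hE (-a) b (-c) (-q) (-p) (by linarith) (by linarith)
        (by nlinarith) (by nlinarith)
    exact ⟨-r', by linear_combination -hr', by linarith, by linarith⟩
  · subst ha
    have hb : b < 0 := by nlinarith
    have hbne : b ≠ 0 := ne_of_lt hb
    refine ⟨-c / b, by field_simp; ring, ?_, ?_⟩
    · rw [lt_div_iff_of_neg hb]; nlinarith
    · rw [div_lt_iff_of_neg hb]; nlinarith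
  · exact quad_bolzano_pos hE a b c p q ha hpq hp hq

/-- **Bolzano's theorem for piecewise-quadratic functions over a Euclidean
field.**  Let `F` be a Euclidean field, `f₁`, `f₂` quadratic functions,
`s ∈ F`, and `f` a function agreeing with `f₁` on `(-∞, s]` and with `f₂` on
`[s, ∞)`.  If `p < q`, `f(p) > 0` and `f(q) < 0`, then `f` has a root strictly
between `p` and `q`. -/
theorem piecewise_quadratic_bolzano
    {F : Type*} [Field F] [LinearOrder F] [IsStrictOrderedRing F]
    (hE : ∀ x : F, 0 ≤ x → ∃ y : F, y ^ 2 = x)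
    (f f₁ f₂ : F → F) (a₁ b₁ c₁ a₂ b₂ c₂ : F)
    (hf₁ : ∀ x : F, f₁ x = a₁ * x ^ 2 + b₁ * x + c₁)
    (hf₂ : ∀ x : F, f₂ x = a₂ * x ^ 2 + b₂ * x + c₂)
    (s : F)
    (hle : ∀ x : F, x ≤ s → f x = f₁ x)
    (hge : ∀ x : F, s ≤ x → f x = f₂ x)
    (p q : F) (hpq : p < q) (hp : 0 < f p) (hq : f q < 0) :
    ∃ r : F, f r = 0 ∧ p < r ∧ r < q := by
  rcases le_or_gt s p with hsp | hps
  · -- f = f₂ on [p, q]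
    have hp' : 0 < a₂ * p ^ 2 + b₂ * p + c₂ := by
      rw [← hf₂, ← hge p hsp]; exact hp
    have hq' : a₂ * q ^ 2 + b₂ * q + c₂ < 0 := by
      rw [← hf₂, ← hge q (hsp.trans hpq.le)]; exact hq
    obtain ⟨r, hr, hr1, hr2⟩ := quad_bolzano hE a₂ b₂ c₂ p q hpq hp' hq'
    exact ⟨r, by rw [hge r (hsp.trans hr1.le), hf₂]; exact hr, hr1, hr2⟩
  rcases le_or_gt q s with hqs | hsq
  · -- f = f₁ on [p, q]
    have hp' : 0 < a₁ * p ^ 2 + b₁ * p + c₁ := by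
      rw [← hf₁, ← hle p (hpq.le.trans hqs)]; exact hp
    have hq' : a₁ * q ^ 2 + b₁ * q + c₁ < 0 := by
      rw [← hf₁, ← hle q hqs]; exact hq
    obtain ⟨r, hr, hr1, hr2⟩ := quad_bolzano hE a₁ b₁ c₁ p q hpq hp' hq'
    exact ⟨r, by rw [hle r (hr2.le.trans hqs), hf₁]; exact hr, hr1, hr2⟩
  · -- p < s < q
    rcases lt_trichotomy (f s) 0 with hfs | hfs | hfs
    · -- root of f₁ in (p, s)
      have hp' : 0 < a₁ * p ^ 2 + b₁ * p + c₁ := by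
        rw [← hf₁, ← hle p hps.le]; exact hp
      have hs' : a₁ * s ^ 2 + b₁ * s + c₁ < 0 := by
        rw [← hf₁, ← hle s le_rfl]; exact hfs
      obtain ⟨r, hr, hr1, hr2⟩ := quad_bolzano hE a₁ b₁ c₁ p s hps hp' hs'
      exact ⟨r, by rw [hle r hr2.le, hf₁]; exact hr, hr1, hr2.trans hsq⟩
    · exact ⟨s, hfs, hps, hsq⟩
    · -- root of f₂ in (s, q)
      have hs' : 0 < a₂ * s ^ 2 + b₂ * s + c₂ := by
        rw [← hf₂, ← hge s le_rfl]; exact hfs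
      have hq' : a₂ * q ^ 2 + b₂ * q + c₂ < 0 := by
        rw [← hf₂, ← hge q hsq.le]; exact hq
      obtain ⟨r, hr, hr1, hr2⟩ := quad_bolzano hE a₂ b₂ c₂ s q hsq hs' hq'
      exact ⟨r, by rw [hge r hr1.le, hf₂]; exact hr, hps.trans hr1, hr2⟩
end

section
/- Let F be a Euclidean field and let a, b, d, v ∈ F satisfy d ≠ 0, v > 0 and a + b·v ≠ 0. Define g : F → F by g(x) = |d|·(v − x) − |a + b·x|·x. Then there exists u ∈ F with 0 < u < v and g(u) = 0 (and for any such u, necessarily a + b·u ≠ 0). -/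
set_option maxHeartbeats 1000000 in
lemma quad_root_aux {F : Type*} [Field F] [LinearOrder F] [IsStrictOrderedRing F]
    (hE : ∀ x : F, 0 ≤ x → ∃ y : F, y ^ 2 = x)
    (c p r v : F) (hv : 0 < v) (hr : r < 0)
    (hqv : 0 < c * v ^ 2 + p * v + r) :
    ∃ u : F, 0 < u ∧ u < v ∧ c * u ^ 2 + p * u + r = 0 := by
  rcases eq_or_ne c 0 with rfl | hc
  · have hp : 0 < p := by nlinarith
    refine ⟨-r / p, div_pos (by linarith) hp, ?_, by field_simp; ring⟩
    rw [div_lt_iff₀ hp]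
    nlinarith
  · have hdisc : 0 ≤ p ^ 2 - 4 * c * r := by
      rcases hc.lt_or_gt with h | h
      · nlinarith [sq_nonneg (2 * c * v + p), mul_neg_of_neg_of_pos h hqv]
      · nlinarith
    obtain ⟨s, hs⟩ := hE _ hdisc
    have hts : |s| ^ 2 = p ^ 2 - 4 * c * r := by rw [sq_abs, hs]
    set t := |s| with htdef
    have ht0 : 0 ≤ t := abs_nonneg s
    set u : F := (-p + t) / (2 * c) with hudef
    have hu2 : 2 * c * u = -p + t := by
      rw [hudef]; field_simp
    have hroot : c * u ^ 2 + p * u + r = 0 := by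
      have h4 : (2 * c * u + p) ^ 2 = p ^ 2 - 4 * c * r := by rw [hu2]; ring_nf; linear_combination hts
      have h5 : 4 * c * (c * u ^ 2 + p * u + r) = 0 := by linear_combination h4
      have h6 : (4 : F) * c ≠ 0 := by positivity
      exact (mul_eq_zero.mp h5).resolve_left h6
    have h1 : 0 < 2 * c * v + p + t := by
      rcases hc.lt_or_gt with h | h
      · by_contra hcon
        push_neg at hcon
        have hle : t ≤ -(2 * c * v + p) := by linarith
        have hsq : t ^ 2 ≤ (2 * c * v + p) ^ 2 := by nlinarith [ht0]
        nlinarith [mul_neg_of_neg_of_pos h hqv, hsq, hts]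
      · -- c > 0 : t^2 = p^2 - 4cr > p^2 so t > -p
        have hcr : 0 < c * (-r) := mul_pos h (by linarith)
        have hpt : -p < t := by
          by_contra hcon
          push_neg at hcon
          have hsq : t ^ 2 ≤ p ^ 2 := by nlinarith [ht0]
          nlinarith [hsq, hts]
        nlinarith [mul_pos h hv]
    have h2 : 0 < c * v + c * u + p := by linarith [h1, hu2]
    have h3 : 0 < (v - u) * (c * v + c * u + p) := by
      have : (v - u) * (c * v + c * u + p) = (c * v ^ 2 + p * v + r) - (c * u ^ 2 + p * u + r) := by ring
      rw [this, hroot]; linarith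
    have huv : u < v := by nlinarith [h2, h3]
    have hu0 : 0 < u := by
      rcases hc.lt_or_gt with h | h
      · -- c < 0 : need -p + t < 0, i.e. t < p; p > 0 and t^2 < p^2
        have hp : 0 < p := by nlinarith [mul_pos (neg_pos.mpr h) (mul_pos hv hv)]
        have htp : t < p := by
          by_contra hcon
          push_neg at hcon
          have hsq : p ^ 2 ≤ t ^ 2 := by nlinarith [hp.le]
          nlinarith [hsq, hts, mul_pos_of_neg_of_neg h hr]
        have : -p + t < 0 := by linarith
        exact div_pos_of_neg_of_neg this (by linarith)
      · have hpt : p < t := by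
          by_contra hcon
          push_neg at hcon
          have hsq : t ^ 2 ≤ p ^ 2 := by nlinarith [ht0]
          nlinarith [hsq, hts, mul_pos h (neg_pos.mpr hr)]
        apply div_pos (by linarith) (by linarith)
    exact ⟨u, hu0, huv, hroot⟩

lemma crossing_aux {F : Type*} [Field F] [LinearOrder F] [IsStrictOrderedRing F]
    (a b v : F) (hv : 0 < v) (h : a * (a + b * v) < 0) :
    ∃ x₀ : F, 0 ≤ x₀ ∧ x₀ < v ∧ a + b * x₀ = 0 := by
  have hb : b ≠ 0 := by
    rintro rfl
    nlinarith [sq_nonneg a]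
  refine ⟨-a / b, ?_, ?_, by field_simp; ring⟩
  · have hbx : b * (-a / b) = -a := by field_simp
    set x₀ : F := -a / b with hx
    have hb2 : 0 < b ^ 2 := by positivity
    have heq : b ^ 2 * (x₀ * (v - x₀)) = -(a * (a + b * v)) := by
      linear_combination (b * v - b * x₀ + a) * hbx
    have k1 : 0 < b ^ 2 * (x₀ * (v - x₀)) := by rw [heq]; linarith
    have k2 : 0 < x₀ * (v - x₀) := by nlinarith [k1, hb2]
    nlinarith [k2, hv]
  · have hbx : b * (-a / b) = -a := by field_simp
    set x₀ : F := -a / b with hx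
    have hb2 : 0 < b ^ 2 := by positivity
    have heq : b ^ 2 * (x₀ * (v - x₀)) = -(a * (a + b * v)) := by
      linear_combination (b * v - b * x₀ + a) * hbx
    have k1 : 0 < b ^ 2 * (x₀ * (v - x₀)) := by rw [heq]; linarith
    have k2 : 0 < x₀ * (v - x₀) := by nlinarith [k1, hb2]
    nlinarith [k2, hv]

/-- Let `F` be a Euclidean field and `a, b, d, v ∈ F` with `d ≠ 0`, `v > 0`
and `a + b·v ≠ 0`.  Define `g(x) = |d|·(v − x) − |a + b·x|·x`.  Then `g` has
a root `u` with `0 < u < v`, and any such root satisfies `a + b·u ≠ 0`. -/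
theorem exists_root_of_speed_equation
    {F : Type*} [Field F] [LinearOrder F] [IsStrictOrderedRing F]
    (hE : ∀ x : F, 0 ≤ x → ∃ y : F, y ^ 2 = x)
    (a b d v : F) (hd : d ≠ 0) (hv : 0 < v) (habv : a + b * v ≠ 0)
    (g : F → F) (hg : ∀ x : F, g x = |d| * (v - x) - |a + b * x| * x) :
    (∃ u : F, 0 < u ∧ u < v ∧ g u = 0) ∧
      (∀ u : F, 0 < u → u < v → g u = 0 → a + b * u ≠ 0) := by
  have hD : 0 < |d| := abs_pos.mpr hd
  constructor
  · by_cases hcase : ∃ x₀ : F, 0 ≤ x₀ ∧ x₀ < v ∧ a + b * x₀ = 0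
    · obtain ⟨x₀, hx0, hx0v, hax⟩ := hcase
      have hb : b ≠ 0 := by
        rintro rfl
        simp only [zero_mul, add_zero] at hax habv
        exact habv hax
      have hbabs : 0 < |b| := abs_pos.mpr hb
      have hv' : 0 < v - x₀ := by linarith
      obtain ⟨t, ht0, htv, hqt⟩ := quad_root_aux hE |b| (|b| * x₀ + |d|) (|d| * (x₀ - v)) (v - x₀)
        hv' (by nlinarith) (by nlinarith [mul_pos (mul_pos hbabs hv') hv])
      refine ⟨x₀ + t, by linarith, by linarith, ?_⟩
      have heq : a + b * (x₀ + t) = b * t := by linear_combination hax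
      rw [hg, heq, abs_mul, abs_of_pos ht0]
      linear_combination -hqt
    · push_neg at hcase
      have hsign : 0 ≤ a * (a + b * v) := by
        by_contra hcon
        push_neg at hcon
        obtain ⟨x₀, h1, h2, h3⟩ := crossing_aux a b v hv hcon
        exact hcase x₀ h1 h2 h3
      have ha : a ≠ 0 := by
        intro h0
        exact hcase 0 le_rfl hv (by rw [h0, mul_zero, add_zero])
      rcases ha.lt_or_gt with ha | ha
      · -- a < 0, hence a + b*v < 0
        have hbv : a + b * v < 0 := by
          rcases lt_or_ge (a + b * v) 0 with h | h
          · exact h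
          · exfalso; rcases h.lt_or_eq with h | h
            · nlinarith
            · exact habv h.symm
        obtain ⟨u, hu0, huv, hroot⟩ := quad_root_aux hE (-b) (|d| - a) (-(|d| * v)) v hv
          (by nlinarith) (by nlinarith [mul_pos hv (neg_pos.mpr hbv)])
        refine ⟨u, hu0, huv, ?_⟩
        have hneg : a + b * u < 0 := by nlinarith [mul_pos hu0 (sub_pos.mpr huv)]
        rw [hg, abs_of_neg hneg]
        linear_combination -hroot
      · -- a > 0, hence a + b*v > 0
        have hbv : 0 < a + b * v := by
          rcases lt_or_ge 0 (a + b * v) with h | h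
          · exact h
          · exfalso; rcases h.lt_or_eq with h | h
            · nlinarith
            · exact habv h
        obtain ⟨u, hu0, huv, hroot⟩ := quad_root_aux hE b (a + |d|) (-(|d| * v)) v hv
          (by nlinarith) (by nlinarith [mul_pos hv hbv])
        refine ⟨u, hu0, huv, ?_⟩
        have hpos : 0 < a + b * u := by nlinarith [mul_pos hu0 (sub_pos.mpr huv)]
        rw [hg, abs_of_pos hpos]
        linear_combination -hroot
  · intro u hu0 huv hgu h
    rw [hg, h, abs_zero, zero_mul, sub_zero] at hgu
    nlinarith [mul_pos hD (sub_pos.mpr huv)]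
end

section
/- Let F be a Euclidean field, let v, v' ∈ F with v > 0 and v' > 0, and let T : F² → F² be a bijective linear map which maps the line {q·(1,0) : q ∈ F} into the line {q·(1,v') : q ∈ F} and maps the line {q·(1,v) : q ∈ F} into the line {q·(1,0) : q ∈ F}. Then there exists u ∈ F with 0 < u < v such that the first component of T(1,u) is nonzero and |T(1,u)₂| = u·|T(1,u)₁| (i.e. the speed |x₂|/|x₁| of the vector (1,u) equals that of its image T(1,u)). -/
lemma interval_mem' {F : Type*} [Field F] [LinearOrder F] [IsStrictOrderedRing F] {x y : F}
    (h : (x * (1 - x)) * (y * (1 - y)) < 0) :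
    (0 < x ∧ x < 1) ∨ (0 < y ∧ y < 1) := by
  by_contra hcon
  push_neg at hcon
  obtain ⟨h1, h2⟩ := hcon
  have hx : x * (1 - x) ≤ 0 := by
    rcases le_or_gt x 0 with h' | h'
    · nlinarith
    · have := h1 h'; nlinarith
  have hy : y * (1 - y) ≤ 0 := by
    rcases le_or_gt y 0 with h' | h'
    · nlinarith
    · have := h2 h'; nlinarith
  nlinarith

lemma quad_root' {F : Type*} [Field F] [LinearOrder F] [IsStrictOrderedRing F]
    (hE : ∀ x : F, 0 ≤ x → ∃ y : F, y ^ 2 = x)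
    (c d e : F) (h : e * (c + d + e) < 0) :
    ∃ t : F, 0 < t ∧ t < 1 ∧ c * t ^ 2 + d * t + e = 0 := by
  by_cases hc : c = 0
  · subst hc
    have hd : d ≠ 0 := by rintro rfl; nlinarith [mul_self_nonneg e]
    refine ⟨-e / d, ?_, ?_, by field_simp; ring⟩
    · rcases lt_or_gt_of_ne hd with h' | h'
      · have he : 0 < e := by nlinarith
        exact div_pos_of_neg_of_neg (by linarith) h'
      · have he : e < 0 := by nlinarith
        exact div_pos (by linarith) h'
    · rcases lt_or_gt_of_ne hd with h' | h'
      · have he : 0 < e := by nlinarith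
        rw [div_lt_iff_of_neg h']; nlinarith
      · have he : e < 0 := by nlinarith
        rw [div_lt_iff₀ h']; nlinarith
  · have hdisc : 0 < d ^ 2 - 4 * c * e := by
      by_contra hle
      push_neg at hle
      nlinarith [sq_nonneg (2 * c + d), sq_nonneg d, sq_nonneg c, mul_self_pos.2 hc]
    obtain ⟨s, hs⟩ := hE _ hdisc.le
    set r1 := (-d + s) / (2 * c) with hr1
    set r2 := (-d - s) / (2 * c) with hr2
    have hroot1 : c * r1 ^ 2 + d * r1 + e = 0 := by
      rw [hr1]; field_simp; nlinarith [hs]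
    have hroot2 : c * r2 ^ 2 + d * r2 + e = 0 := by
      rw [hr2]; field_simp; nlinarith [hs]
    have hprod : (r1 * (1 - r1)) * (r2 * (1 - r2)) < 0 := by
      have e1 : r1 * r2 = e / c := by
        rw [hr1, hr2]; field_simp; linear_combination (-1) * hs
      have e2 : (1 - r1) * (1 - r2) = (c + d + e) / c := by
        rw [hr1, hr2]; field_simp; linear_combination (-1) * hs
      have : (r1 * (1 - r1)) * (r2 * (1 - r2)) = (e / c) * ((c + d + e) / c) := by
        rw [← e1, ← e2]; ring
      rw [this, div_mul_div_comm]
      exact div_neg_of_neg_of_pos h (mul_self_pos.2 hc)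
    rcases interval_mem' hprod with ⟨h1, h2⟩ | ⟨h1, h2⟩
    · exact ⟨r1, h1, h2, hroot1⟩
    · exact ⟨r2, h1, h2, hroot2⟩



/-- Let `F` be a Euclidean field, `v, v' > 0`, and `T : F² → F²` a bijective
linear map taking the line through `(1,0)` into the line through `(1,v')` and
the line through `(1,v)` into the line through `(1,0)`.  Then there is `u` with
`0 < u < v` such that `T(1,u)` has nonzero first component and the speed
`|x₂|/|x₁|` of `(1,u)` equals that of `T(1,u)`, i.e.
`|T(1,u)₂| = u·|T(1,u)₁|`. -/
theorem exists_agreed_speed_vector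
    {F : Type*} [Field F] [LinearOrder F] [IsStrictOrderedRing F]
    (hE : ∀ x : F, 0 ≤ x → ∃ y : F, y ^ 2 = x)
    (v v' : F) (hv : 0 < v) (hv' : 0 < v')
    (T : (F × F) →ₗ[F] (F × F)) (hbij : Function.Bijective T)
    (hT1 : ∀ p : F × F, (∃ q : F, p = q • ((1 : F), (0 : F))) →
      ∃ q' : F, T p = q' • ((1 : F), v'))
    (hT2 : ∀ p : F × F, (∃ q : F, p = q • ((1 : F), v)) →
      ∃ q' : F, T p = q' • ((1 : F), (0 : F))) :
    ∃ u : F, 0 < u ∧ u < v ∧ (T (1, u)).1 ≠ 0 ∧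
      |(T (1, u)).2| = u * |(T (1, u)).1| := by
  obtain ⟨a, ha⟩ := hT1 (1, 0) ⟨1, by simp⟩
  obtain ⟨b, hb⟩ := hT2 (1, v) ⟨1, by simp⟩
  have ha0 : a ≠ 0 := by
    rintro rfl
    have h0 : T (1, 0) = T 0 := by rw [ha]; simp
    have := hbij.1 h0
    simp [Prod.ext_iff] at this
  have hb0 : b ≠ 0 := by
    rintro rfl
    have h0 : T (1, v) = T 0 := by rw [hb]; simp
    have := hbij.1 h0
    simp [Prod.ext_iff] at this
  have hTu : ∀ t : F, T (1, t * v) = ((1 - t) * a + t * b, (1 - t) * (a * v')) := by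
    intro t
    have hdecomp : ((1 : F), t * v) = (1 - t) • ((1 : F), (0 : F)) + t • ((1 : F), v) := by
      simp [Prod.ext_iff, Prod.smul_def, smul_eq_mul]
    rw [hdecomp, map_add, map_smul, map_smul, ha, hb]
    simp [Prod.ext_iff, Prod.smul_def, smul_eq_mul]
  have hab : a * b ≠ 0 := mul_ne_zero ha0 hb0
  -- find t in (0,1) with (1-t)*(a*v') = ±(t*v*((1-t)*a + t*b))
  have key : ∃ t : F, 0 < t ∧ t < 1 ∧
      |(1 - t) * (a * v')| = |t * v * ((1 - t) * a + t * b)| := by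
    rcases lt_or_gt_of_ne hab with hneg | hpos
    · -- a*b < 0 : use ε = 1
      obtain ⟨t, ht0, ht1, heq⟩ := quad_root' hE (v * (b - a)) (v * a - a * v') (a * v')
        (by nlinarith [mul_pos hv hv'])
      refine ⟨t, ht0, ht1, ?_⟩
      have hX : (1 - t) * (a * v') = -(t * v * ((1 - t) * a + t * b)) := by
        linear_combination heq
      rw [hX, abs_neg]
    · -- a*b > 0 : use ε = -1
      obtain ⟨t, ht0, ht1, heq⟩ := quad_root' hE (v * (b - a)) (v * a + a * v') (-(a * v'))
        (by nlinarith [mul_pos hv hv'])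
      refine ⟨t, ht0, ht1, ?_⟩
      have hX : (1 - t) * (a * v') = t * v * ((1 - t) * a + t * b) := by
        linear_combination -heq
      rw [hX]
  obtain ⟨t, ht0, ht1, habs⟩ := key
  have htv : 0 < t * v := mul_pos ht0 hv
  refine ⟨t * v, htv, by nlinarith, ?_, ?_⟩
  · rw [hTu t]
    show (1 - t) * a + t * b ≠ 0
    intro h0
    rw [h0, mul_zero, abs_zero] at habs
    have hne : (1 - t) * (a * v') ≠ 0 :=
      mul_ne_zero (by linarith) (mul_ne_zero ha0 hv'.ne')
    exact hne (abs_eq_zero.mp habs)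
  · rw [hTu t]
    show |(1 - t) * (a * v')| = t * v * |(1 - t) * a + t * b|
    rw [habs, abs_mul, abs_of_pos htv]
end

section
/- Let F be a linearly ordered field and let Φ : F⁴ → F⁴ be a bijective linear map such that for all x, y ∈ F⁴: (Φ(x))₁ = (Φ(y))₁ if and only if x₁ = y₁. Then there exist q ∈ F with q > 0 and a linear map L : F⁴ → F⁴ satisfying |(L(x))₁| = |x₁| for all x ∈ F⁴, such that Φ(x) = q·L(x) for all x ∈ F⁴. -/
/-- Let `F` be a linearly ordered field and `Φ : F⁴ → F⁴` a bijective linear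
map such that `(Φ x)₁ = (Φ y)₁ ↔ x₁ = y₁` for all `x`, `y`.  Then there are
`q > 0` and a time-preserving linear map `L : F⁴ → F⁴` (i.e. `|(L x)₁| = |x₁|`
for all `x`) with `Φ(x) = q·L(x)` for all `x`. -/
theorem time_bijective_linear_decomposition
    {F : Type*} [Field F] [LinearOrder F] [IsStrictOrderedRing F]
    (Φ : (Fin 4 → F) →ₗ[F] (Fin 4 → F)) (hbij : Function.Bijective Φ)
    (htime : ∀ x y : Fin 4 → F, (Φ x) 0 = (Φ y) 0 ↔ x 0 = y 0) :
    ∃ q : F, 0 < q ∧ ∃ L : (Fin 4 → F) →ₗ[F] (Fin 4 → F),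
      (∀ x : Fin 4 → F, |(L x) 0| = |x 0|) ∧
      ∀ x : Fin 4 → F, Φ x = q • L x := by
  set e : Fin 4 → F := Pi.single 0 1 with he
  set c : F := (Φ e) 0 with hc
  have hschur : ∀ x : Fin 4 → F, (Φ x) 0 = c * x 0 := by
    intro x
    have h1 : (x 0 • e) 0 = x 0 := by simp [he]
    have h2 : (Φ x) 0 = (Φ (x 0 • e)) 0 := (htime x (x 0 • e)).mpr h1.symm
    rw [h2, map_smul]
    simp [mul_comm, hc]
  have hcne : c ≠ 0 := by
    intro h0
    have := (htime e 0).mp (by simp [hschur e, h0])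
    simp [he] at this
  refine ⟨|c|, abs_pos.mpr hcne, |c|⁻¹ • Φ, ?_, ?_⟩
  · intro x
    simp [hschur x, abs_mul, abs_inv, abs_abs, inv_mul_cancel_left₀ (abs_ne_zero.mpr hcne)]
  · intro x
    simp [smul_smul, mul_inv_cancel₀ (abs_ne_zero.mpr hcne)]
end
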